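/- arXiv:1108.2427 — 2 statements merged into one kernel-verified Lean document; each statement's English description precedes it below -/
import Mathlib

section
/- Let L₁ and L₂ be regular languages over Σ with L₁ ⊆ ⋃_{α ∈ Σ^κ} Σ*·α·Σ*·overline(α) and L₂ ⊆ ⋃_{α ∈ Σ^κ} α·Σ*·overline(α)·Σ*. Then max(λ_{L₁}, λ_{L₂}) = max(λ_{Mid(L₁,L₂)}, λ_{MGP(L₁,L₂)}). -/
/-- The antimorphic extension of an involution on letters to words. -/
def ovr {σ : Type} (bar : σ → σ) (w : List σ) : List σ := (w.map bar).reverse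

/-- The hairpin completion `H_κ(L₁, L₂)`. -/
def hairpinCompletion {σ : Type} (bar : σ → σ) (κ : ℕ) (L1 L2 : Language σ) :
    Language σ :=
  { π | ∃ γ α β : List σ,
      π = γ ++ α ++ β ++ ovr bar α ++ ovr bar γ ∧
      κ ≤ α.length ∧
      (γ ++ α ++ β ++ ovr bar α ∈ L1 ∨ α ++ β ++ ovr bar α ++ ovr bar γ ∈ L2) }

/-- The canonical factorization `(γ, α, β)` of a word `π` of the hairpin completion. -/
def CanonFact {σ : Type} (bar : σ → σ) (κ : ℕ) (L1 L2 : Language σ)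
    (π γ α β : List σ) : Prop :=
  π = γ ++ α ++ β ++ ovr bar α ++ ovr bar γ ∧
  α.length = κ ∧
  (γ ++ α ++ β ++ ovr bar α ∈ L1 ∨ α ++ β ++ ovr bar α ++ ovr bar γ ∈ L2) ∧
  (∀ u : List σ, u <+: π → u ∈ L1 → u <+: γ ++ α ++ β ++ ovr bar α) ∧
  (∀ u : List σ, u <:+ π → u ∈ L2 → u <:+ α ++ β ++ ovr bar α ++ ovr bar γ)

/-- The language of minimal gamma-alpha-prefixes of words of the hairpin completion. -/
def MGP {σ : Type} (bar : σ → σ) (κ : ℕ) (L1 L2 : Language σ) : Language σ :=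
  { p | ∃ π γ α β : List σ, π ∈ hairpinCompletion bar κ L1 L2 ∧
      CanonFact bar κ L1 L2 π γ α β ∧ p = γ ++ α }

/-- The language of middle factors of canonical factorizations of words
of the hairpin completion. -/
def Mid {σ : Type} (bar : σ → σ) (κ : ℕ) (L1 L2 : Language σ) : Language σ :=
  { β | ∃ π γ α : List σ, π ∈ hairpinCompletion bar κ L1 L2 ∧
      CanonFact bar κ L1 L2 π γ α β }

/-- The growth indicator of a language: the infimum of all `λ ≥ 0` such that
`|L ∩ Σ^m| ≤ c·λ^m` for some constant `c > 0` and all `m`. -/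
noncomputable def growthInd {σ : Type} (L : Language σ) : ℝ :=
  sInf { l : ℝ | 0 ≤ l ∧ ∃ c : ℝ, 0 < c ∧
    ∀ m : ℕ, (Set.ncard { w : List σ | w ∈ L ∧ w.length = m } : ℝ) ≤ c * l ^ m }

namespace HPC

variable {σ : Type}

theorem ovr_length (bar : σ → σ) (w : List σ) : (ovr bar w).length = w.length := by
  simp [ovr]

theorem ovr_append (bar : σ → σ) (x y : List σ) :
    ovr bar (x ++ y) = ovr bar y ++ ovr bar x := by
  simp [ovr]

theorem ovr_take (bar : σ → σ) (k : ℕ) (w : List σ) :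
    (ovr bar w).take k = ovr bar (w.drop (w.length - k)) := by
  unfold ovr
  rw [← List.reverse_reverse (List.take k (w.map bar).reverse), List.reverse_take]
  simp [List.map_drop]

theorem ovr_drop (bar : σ → σ) (k : ℕ) (w : List σ) :
    (ovr bar w).drop k = ovr bar (w.take (w.length - k)) := by
  rcases le_or_gt k w.length with h | h
  · unfold ovr
    rw [List.map_take, List.reverse_take]
    congr 1
    simp
    omega
  · rw [List.drop_of_length_le (by simp [ovr_length]; omega)]
    have : w.length - k = 0 := by omega
    simp [this, ovr]

/-- Existence of a canonical factorization for any word with a hairpin witness. -/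
theorem key1 {bar : σ → σ} {κ : ℕ} {L1 L2 : Language σ} {π γ₀ α₀ β₀ : List σ}
    (hπ : π = γ₀ ++ α₀ ++ β₀ ++ ovr bar α₀ ++ ovr bar γ₀) (hκ : κ ≤ α₀.length)
    (hw : γ₀ ++ α₀ ++ β₀ ++ ovr bar α₀ ∈ L1 ∨ α₀ ++ β₀ ++ ovr bar α₀ ++ ovr bar γ₀ ∈ L2) :
    ∃ γ α β, CanonFact bar κ L1 L2 π γ α β := by
  classical
  set n := π.length with hn
  set g₀ := γ₀.length with hg₀
  set a₀ := α₀.length with ha₀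
  set b₀ := β₀.length with hb₀
  set ℓ₀ := g₀ + a₀ + b₀ + a₀ with hℓ₀
  have hlen : n = g₀ + a₀ + b₀ + a₀ + g₀ := by
    simp [hn, hπ, ovr_length]
    omega
  -- basic pieces of π
  have hπ2 : π = γ₀ ++ (α₀ ++ β₀ ++ ovr bar α₀ ++ ovr bar γ₀) := by
    rw [hπ]; simp [List.append_assoc]
  have htg₀ : π.take g₀ = γ₀ := by
    rw [hπ2, hg₀, List.take_left]
  have hdg₀ : π.drop g₀ = α₀ ++ β₀ ++ ovr bar α₀ ++ ovr bar γ₀ := by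
    rw [hπ2, hg₀, List.drop_left]
  have hπleft : π = (γ₀ ++ α₀ ++ β₀ ++ ovr bar α₀) ++ ovr bar γ₀ := by
    rw [hπ]
  have hlenleft : (γ₀ ++ α₀ ++ β₀ ++ ovr bar α₀).length = ℓ₀ := by
    simp [ovr_length, hℓ₀]; omega
  have htℓ₀ : π.take ℓ₀ = γ₀ ++ α₀ ++ β₀ ++ ovr bar α₀ := by
    rw [hπleft, ← hlenleft, List.take_left]
  have hdℓ₀ : π.drop ℓ₀ = ovr bar γ₀ := by
    rw [hπleft, ← hlenleft, List.drop_left]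
  -- the set of "good" lengths
  set F : Finset ℕ := (Finset.range (n+1)).filter
    (fun ℓ => π.take ℓ ∈ L1 ∨ π.drop (n - ℓ) ∈ L2) with hF
  have hF0 : ℓ₀ ∈ F := by
    rw [hF, Finset.mem_filter, Finset.mem_range]
    constructor
    · omega
    · rcases hw with h | h
      · left; rw [htℓ₀]; exact h
      · right
        have : n - ℓ₀ = g₀ := by omega
        rw [this, hdg₀]; exact h
  set M := F.max' ⟨ℓ₀, hF0⟩ with hM
  have hMmem : M ∈ F := F.max'_mem _
  have hMF := hMmem
  rw [hF, Finset.mem_filter, Finset.mem_range] at hMF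
  have hMn : M ≤ n := by omega
  have hMℓ₀ : ℓ₀ ≤ M := Finset.le_max' F ℓ₀ hF0
  have hMmax : ∀ ℓ ∈ F, ℓ ≤ M := fun ℓ h => Finset.le_max' F ℓ h
  set g := n - M with hg
  have hgg₀ : g ≤ g₀ := by omega
  have hM2κ : g + κ + κ ≤ M := by omega
  set γ := π.take g with hγ
  set α := (π.drop g).take κ with hα
  set β := (π.take (M - κ)).drop (g + κ) with hβ
  have hγlen : γ.length = g := by
    simp [hγ]; omega
  have hαlen : α.length = κ := by
    simp [hα]; omega
  -- (E1)
  have htgγ₀ : γ₀.take g = γ := by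
    rw [hγ, ← htg₀, List.take_take]
    congr 1
    omega
  have hE1 : π.drop M = ovr bar γ := by
    have h1 : π.drop M = (π.drop ℓ₀).drop (M - ℓ₀) := by
      rw [List.drop_drop]
      congr 1
      omega
    rw [h1, hdℓ₀, ovr_drop]
    rw [← htgγ₀]
    congr 1
    congr 1
    omega
  -- (E2)
  have hE2 : (π.take M).drop (M - κ) = ovr bar α := by
    have h0 : (π.take M).drop (M - κ) = (π.drop (M - κ)).take κ := by
      rw [List.drop_take]
      congr 1
      omega
    rcases le_or_gt κ (M - ℓ₀) with hd | hd
    · -- the window is entirely inside the tail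
      have h1 : π.drop (M - κ) = ovr bar (γ₀.take (g + κ)) := by
        have h2 : π.drop (M - κ) = (π.drop ℓ₀).drop (M - κ - ℓ₀) := by
          rw [List.drop_drop]; congr 1; omega
        rw [h2, hdℓ₀, ovr_drop]
        congr 1
        congr 1
        omega
      rw [h0, h1, ovr_take]
      have h3 : (γ₀.take (g + κ)).length = g + κ := by
        simp; omega
      rw [h3]
      have h4 : (γ₀.take (g+κ)).drop (g + κ - κ) = (γ₀.drop g).take κ := by
        rw [List.drop_take]
        congr 1
        · omega
        · congr 1
          omega
      rw [h4]
      congr 1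
      rw [hα, ← htg₀, List.drop_take]
      rw [List.take_take]
      congr 1
      omega
    · -- the window spans the border
      set d := M - ℓ₀ with hdd
      have h1 : π.take M = π.take ℓ₀ ++ (π.drop ℓ₀).take d := by
        have : M = ℓ₀ + d := by omega
        rw [this, List.take_add]
      have h2 : (π.take M).drop (M - κ) =
          (π.take ℓ₀).drop (M - κ) ++ (π.drop ℓ₀).take d := by
        rw [h1, List.drop_append]
        have h3 : M - κ - (π.take ℓ₀).length = 0 := by
          simp
          omega
        rw [h3, List.drop_zero]
      -- A-part
      have hA : (π.take ℓ₀).drop (M - κ) = ovr bar (α₀.take (κ - d)) := by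
        rw [htℓ₀]
        have h4 : γ₀ ++ α₀ ++ β₀ ++ ovr bar α₀ = (γ₀ ++ α₀ ++ β₀) ++ ovr bar α₀ := by
          simp [List.append_assoc]
        rw [h4, List.drop_append]
        have h5 : (γ₀ ++ α₀ ++ β₀).drop (M - κ) = [] := by
          apply List.drop_of_length_le
          simp
          omega
        rw [h5, List.nil_append, ovr_drop]
        have h5a : (γ₀ ++ α₀ ++ β₀).length = g₀ + a₀ + b₀ := by
          simp; omega
        congr 1
        congr 1
        rw [h5a]
        omega
      -- B-part
      have hB : (π.drop ℓ₀).take d = ovr bar (γ₀.drop g) := by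
        rw [hdℓ₀, ovr_take]
        congr 1
        congr 1
        omega
      -- α decomposition
      have hαdec : α = γ₀.drop g ++ α₀.take (κ - d) := by
        have h6 : π.drop g = γ₀.drop g ++ (α₀ ++ β₀ ++ ovr bar α₀ ++ ovr bar γ₀) := by
          rw [hπ2, List.drop_append]
          have : g - γ₀.length = 0 := by omega
          rw [this, List.drop_zero]
        rw [hα, h6, List.take_append]
        have h7 : (γ₀.drop g).length = d := by simp; omega
        have h8 : (γ₀.drop g).take κ = γ₀.drop g := by
          apply List.take_of_length_le
          omega
        rw [h7, h8]
        congr 1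
        have h9 : α₀ ++ β₀ ++ ovr bar α₀ ++ ovr bar γ₀
            = α₀ ++ (β₀ ++ ovr bar α₀ ++ ovr bar γ₀) := by
          simp [List.append_assoc]
        rw [h9, List.take_append]
        have h10 : (β₀ ++ ovr bar α₀ ++ ovr bar γ₀).take (κ - d - α₀.length) = [] := by
          have : κ - d - α₀.length = 0 := by omega
          simp [this]
        rw [h10, List.append_nil]
      rw [h2, hA, hB, hαdec, ovr_append]
  -- structural assembly
  have h4 : π.take (g + κ) = γ ++ α := by
    rw [List.take_add, hγ, hα]
  have h3 : π.take (M - κ) = (γ ++ α) ++ β := by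
    rw [← h4, hβ]
    have : π.take (g+κ) = (π.take (M-κ)).take (g+κ) := by
      rw [List.take_take]
      congr 1
      omega
    rw [this, List.take_append_drop]
  have h2 : π.take M = ((γ ++ α) ++ β) ++ ovr bar α := by
    rw [← h3, ← hE2]
    have : π.take (M - κ) = (π.take M).take (M - κ) := by
      rw [List.take_take]; congr 1; omega
    rw [this, List.take_append_drop]
  have hXeq : π.take M = γ ++ α ++ β ++ ovr bar α := by
    rw [h2]
  have cond1 : π = γ ++ α ++ β ++ ovr bar α ++ ovr bar γ := by
    have : π = π.take M ++ π.drop M := (List.take_append_drop M π).symm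
    rw [this, hXeq, hE1]
  have hYeq : π.drop g = α ++ β ++ ovr bar α ++ ovr bar γ := by
    have hπ3 : π = γ ++ (α ++ β ++ ovr bar α ++ ovr bar γ) := by
      rw [cond1]; simp [List.append_assoc]
    rw [hπ3]
    have : γ.length = g := hγlen
    rw [← this, List.drop_left]
  have cond3 : (γ ++ α ++ β ++ ovr bar α ∈ L1 ∨ α ++ β ++ ovr bar α ++ ovr bar γ ∈ L2) := by
    rcases hMF.2 with h | h
    · left; rw [← hXeq]; exact h
    · right; rw [← hYeq]
      have : n - M = g := by omega
      rw [← this]; exact h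
  refine ⟨γ, α, β, cond1, hαlen, cond3, ?_, ?_⟩
  · -- cond4
    intro u hu huL1
    have hule : u.length ≤ n := by
      have := hu.length_le
      omega
    have hmem : u.length ∈ F := by
      rw [hF, Finset.mem_filter, Finset.mem_range]
      refine ⟨by omega, Or.inl ?_⟩
      have : u = π.take u.length := List.prefix_iff_eq_take.mp hu
      rw [← this]; exact huL1
    have huM : u.length ≤ M := hMmax _ hmem
    rw [← hXeq]
    have : u = (π.take M).take u.length := by
      rw [List.take_take]
      have h5 : u.length ⊓ M = u.length := by omega
      rw [h5]
      exact List.prefix_iff_eq_take.mp hu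
    rw [this]
    exact List.take_prefix _ _
  · -- cond5
    intro u hu huL2
    have hule : u.length ≤ n := by
      have := hu.length_le
      omega
    have hmem : u.length ∈ F := by
      rw [hF, Finset.mem_filter, Finset.mem_range]
      refine ⟨by omega, Or.inr ?_⟩
      have : u = π.drop (n - u.length) := by
        rw [hn]; exact List.suffix_iff_eq_drop.mp hu
      rw [← this]; exact huL2
    have huM : u.length ≤ M := hMmax _ hmem
    rw [← hYeq]
    have : u = (π.drop g).drop (n - u.length - g) := by
      rw [List.drop_drop]
      have h5 : g + (n - u.length - g) = n - u.length := by omega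
      rw [h5]
      exact List.suffix_iff_eq_drop.mp hu
    rw [this]
    exact List.drop_suffix _ _



variable {σ : Type}

/-- number of words of `L` of length `m` -/
noncomputable def cnt (L : Set (List σ)) (m : ℕ) : ℕ :=
  Set.ncard { w : List σ | w ∈ L ∧ w.length = m }

theorem cnt_finite [Finite σ] (L : Set (List σ)) (m : ℕ) :
    { w : List σ | w ∈ L ∧ w.length = m }.Finite :=
  (List.finite_length_eq σ m).subset (fun _ h => h.2)

theorem cnt_le_pow [Fintype σ] (L : Set (List σ)) (m : ℕ) :
    cnt L m ≤ Fintype.card σ ^ m := by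
  have h1 : cnt L m ≤ Set.ncard { w : List σ | w.length = m } := by
    apply Set.ncard_le_ncard (fun _ h => h.2) (List.finite_length_eq σ m)
  refine h1.trans ?_
  rw [← Nat.card_coe_set_eq]
  have e : ↥{ w : List σ | w.length = m } ≃ List.Vector σ m :=
    ⟨fun x => ⟨x.1, x.2⟩, fun v => ⟨v.1, v.2⟩, fun _ => rfl, fun _ => rfl⟩
  rw [Nat.card_congr e, Nat.card_eq_fintype_card, card_vector]

theorem ncard_prod {A B : Type} (s : Set A) (t : Set B) :
    (s ×ˢ t).ncard = s.ncard * t.ncard := by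
  rw [← Nat.card_coe_set_eq, ← Nat.card_coe_set_eq, ← Nat.card_coe_set_eq,
    Nat.card_congr (Equiv.Set.prod s t), Nat.card_prod]

theorem bucket_ncard_le {B ι : Type} (I : Finset ι) (T : ι → Set B)
    (hT : ∀ i ∈ I, (T i).Finite) :
    { p : ι × B | p.1 ∈ I ∧ p.2 ∈ T p.1 }.ncard ≤ ∑ i ∈ I, (T i).ncard := by
  classical
  induction I using Finset.induction with
  | empty => simp
  | @insert j J hj ih =>
      have hsplit : { p : ι × B | p.1 ∈ insert j J ∧ p.2 ∈ T p.1 }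
          = ((fun b => (j, b)) '' T j) ∪ { p : ι × B | p.1 ∈ J ∧ p.2 ∈ T p.1 } := by
        ext p
        simp only [Set.mem_setOf_eq, Finset.mem_insert, Set.mem_union, Set.mem_image]
        constructor
        · rintro ⟨h1 | h1, h2⟩
          · exact Or.inl ⟨p.2, by simpa [← h1] using h2, by simp [h1.symm]⟩
          · exact Or.inr ⟨h1, h2⟩
        · rintro (⟨b, hb, rfl⟩ | ⟨h1, h2⟩)
          · exact ⟨Or.inl rfl, hb⟩
          · exact ⟨Or.inr h1, h2⟩
      calc { p : ι × B | p.1 ∈ insert j J ∧ p.2 ∈ T p.1 }.ncard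
          ≤ ((fun b => (j, b)) '' T j).ncard
            + { p : ι × B | p.1 ∈ J ∧ p.2 ∈ T p.1 }.ncard := by
            rw [hsplit]; exact Set.ncard_union_le _ _
        _ ≤ (T j).ncard + ∑ i ∈ J, (T i).ncard := by
            gcongr
            · exact le_of_eq (Set.ncard_image_of_injOn
                (fun x _ y _ h => by simpa using h))
            · exact ih (fun i hi => hT i (Finset.mem_insert_of_mem hi))
        _ = ∑ i ∈ insert j J, (T i).ncard := by rw [Finset.sum_insert hj]

/-- Generic counting principle: if every element of `S` is classified into finitely many
buckets with data from which it can be reconstructed, then `S` is counted by the buckets. -/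
theorem ncard_le_sum_of_reconstruct {A B ι : Type} (S : Set A) (I : Finset ι)
    (T : ι → Set B) (hT : ∀ i ∈ I, (T i).Finite)
    (f : A → ι × B) (r : ι → B → A)
    (hf : ∀ a ∈ S, (f a).1 ∈ I ∧ (f a).2 ∈ T (f a).1 ∧ r (f a).1 (f a).2 = a) :
    S.ncard ≤ ∑ i ∈ I, (T i).ncard := by
  classical
  have hUfin : { p : ι × B | p.1 ∈ I ∧ p.2 ∈ T p.1 }.Finite := by
    have hsub : { p : ι × B | p.1 ∈ I ∧ p.2 ∈ T p.1 }
        ⊆ ⋃ i ∈ (I : Finset ι), (fun b => (i, b)) '' T i := by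
      intro p hp
      simp only [Set.mem_iUnion]
      exact ⟨p.1, hp.1, p.2, hp.2, rfl⟩
    exact Set.Finite.subset (Set.Finite.biUnion (I : Finset ι).finite_toSet
      (fun i hi => (hT i (by simpa using hi)).image _)) hsub
  have hsub : f '' S ⊆ { p : ι × B | p.1 ∈ I ∧ p.2 ∈ T p.1 } := by
    rintro _ ⟨a, ha, rfl⟩
    exact ⟨(hf a ha).1, (hf a ha).2.1⟩
  have hinj : Set.InjOn f S := by
    intro a ha b hb hab
    have := (hf a ha).2.2
    rw [hab, (hf b hb).2.2] at this
    exact this.symm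
  calc S.ncard = (f '' S).ncard := (Set.ncard_image_of_injOn hinj).symm
    _ ≤ { p : ι × B | p.1 ∈ I ∧ p.2 ∈ T p.1 }.ncard := Set.ncard_le_ncard hsub hUfin
    _ ≤ ∑ i ∈ I, (T i).ncard := bucket_ncard_le I T hT

/-- absorbing one linear factor into a slightly bigger exponential -/
theorem absorb_one {l l' : ℝ} (hl : 0 < l) (h : l < l') :
    ∃ c : ℝ, 0 < c ∧ ∀ m : ℕ, (m + 1 : ℝ) * l ^ m ≤ c * l' ^ m := by
  set δ := l' - l with hδ
  have hδpos : 0 < δ := by simp [hδ]; linarith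
  refine ⟨l / δ + 1, by positivity, fun m => ?_⟩
  have hbin : (m : ℝ) * l ^ m ≤ (l / δ) * l' ^ m := by
    rcases Nat.eq_zero_or_pos m with rfl | hm
    · simp; positivity
    · have hterm : l ^ (m-1) * δ ^ (m - (m-1)) * (m.choose (m-1) : ℝ) ≤ l' ^ m := by
        have hll : l' = l + δ := by ring
        rw [hll, add_pow]
        exact Finset.single_le_sum (f := fun k => l ^ k * δ ^ (m - k) * (m.choose k : ℝ))
          (fun i _ => by positivity) (by simp only [Finset.mem_range]; omega)
      have h1 : m - (m - 1) = 1 := by omega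
      have h2 : (m.choose (m-1) : ℝ) = m := by
        have := Nat.choose_symm (Nat.one_le_iff_ne_zero.mpr (by omega) : 1 ≤ m)
        rw [this, Nat.choose_one_right]
      rw [h1, h2, pow_one] at hterm
      have h3 : l ^ m = l ^ (m - 1) * l := by
        rw [← pow_succ]
        congr 1
        omega
      rw [h3]
      calc (m : ℝ) * (l ^ (m-1) * l) = (l / δ) * (l ^ (m-1) * δ * m) := by
            field_simp
        _ ≤ (l / δ) * l' ^ m := by
            apply mul_le_mul_of_nonneg_left hterm (by positivity)
  have hmono : l ^ m ≤ l' ^ m := pow_le_pow_left₀ hl.le h.le m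
  nlinarith [pow_nonneg hl.le m]

/-- absorbing a polynomial factor into a slightly bigger exponential -/
theorem absorb_poly (d : ℕ) : ∀ {l l' : ℝ}, 0 < l → l < l' →
    ∃ c : ℝ, 0 < c ∧ ∀ m : ℕ, (m + 1 : ℝ) ^ d * l ^ m ≤ c * l' ^ m := by
  induction d with
  | zero =>
      intro l l' hl h
      exact ⟨1, one_pos, fun m => by
        simpa using pow_le_pow_left₀ hl.le h.le m⟩
  | succ d ih =>
      intro l l' hl h
      set l'' := (l + l') / 2 with hl''
      have h1 : l < l'' := by simp [hl'']; linarith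
      have h2 : l'' < l' := by simp [hl'']; linarith
      obtain ⟨c1, hc1, hc1e⟩ := ih hl h1
      obtain ⟨c2, hc2, hc2e⟩ := absorb_one (lt_trans hl h1) h2
      refine ⟨c1 * c2, by positivity, fun m => ?_⟩
      calc (m + 1 : ℝ) ^ (d+1) * l ^ m = (m+1 : ℝ) ^ d * l ^ m * (m+1) := by ring
        _ ≤ c1 * l'' ^ m * (m+1) := by
            apply mul_le_mul_of_nonneg_right (hc1e m) (by positivity)
        _ = c1 * ((m+1) * l'' ^ m) := by ring
        _ ≤ c1 * (c2 * l' ^ m) := by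
            apply mul_le_mul_of_nonneg_left (hc2e m) hc1.le
        _ = c1 * c2 * l' ^ m := by ring



theorem eval_def {Q : Type} (M : DFA σ Q) (w : List σ) :
    M.eval w = M.evalFrom M.start w := rfl


theorem suffix_of_suffix_length_le {l₁ l₂ l₃ : List σ}
    (h₁ : l₁ <:+ l₃) (h₂ : l₂ <:+ l₃) (h : l₁.length ≤ l₂.length) : l₁ <:+ l₂ := by
  rw [← List.reverse_prefix] at h₁ h₂ ⊢
  exact List.prefix_of_prefix_length_le h₁ h₂ (by simpa using h)

theorem ovr_ovr (bar : σ → σ) (hbar : ∀ a, bar (bar a) = a) (w : List σ) :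
    ovr bar (ovr bar w) = w := by
  have h : bar ∘ bar = id := funext hbar
  simp [ovr, List.map_map, h]

/-- Cutting a canonical factorization in the middle, preserving all conditions. -/
theorem core_cut {Q1 Q2 : Type} (M1 : DFA σ Q1) (M2 : DFA σ Q2)
    {bar : σ → σ} {κ : ℕ} {L1 L2 : Language σ}
    (hM1 : M1.accepts = L1) (hM2 : M2.accepts = L2)
    {π γ α β : List σ} (cf : CanonFact bar κ L1 L2 π γ α β)
    {j₁ j₂ : ℕ} (hj1 : γ.length + κ ≤ j₁) (hj12 : j₁ < j₂)
    (hj2 : j₂ ≤ γ.length + κ + β.length)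
    (hq : M1.eval (π.take j₁) = M1.eval (π.take j₂))
    (hr : M2.evalFrom M2.start ((π.drop γ.length).take (j₁ - γ.length))
        = M2.evalFrom M2.start ((π.drop γ.length).take (j₂ - γ.length)))
    (hS : ∀ i < γ.length, ∃ i' < γ.length,
        M2.evalFrom M2.start ((π.drop i).take (j₁ - i))
          = M2.evalFrom M2.start ((π.drop i').take (j₂ - i'))) :
    CanonFact bar κ L1 L2 (π.take j₁ ++ π.drop j₂) γ α
      (β.take (j₁ - (γ.length + κ)) ++ β.drop (j₂ - (γ.length + κ))) := by
  obtain ⟨hπ, hαl, h3, h4, h5⟩ := cf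
  have evapp1 : ∀ (t s : List σ), M1.eval (t ++ s) = M1.evalFrom (M1.eval t) s := by
    intro t s
    rw [eval_def, DFA.evalFrom_of_append, eval_def]
  have evapp2 : ∀ (t s : List σ),
      M2.evalFrom M2.start (t ++ s) = M2.evalFrom (M2.evalFrom M2.start t) s := by
    intro t s
    rw [DFA.evalFrom_of_append]
  set g := γ.length with hgd
  set b := β.length with hbd
  set n := π.length with hnd
  set i₁ := j₁ - (g + κ) with hi₁
  set i₂ := j₂ - (g + κ) with hi₂
  have hlen : n = g + κ + b + κ + g := by
    simp [hnd, hπ, ovr_length, hαl]; omega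
  set τ : List σ := ovr bar α ++ ovr bar γ with hτ
  have hπ' : π = (γ ++ α) ++ (β ++ τ) := by rw [hπ, hτ]; simp [List.append_assoc]
  have hgal : (γ ++ α).length = g + κ := by simp [hαl, hgd]
  have B1 : ∀ j, g + κ ≤ j → j ≤ g + κ + b → π.take j = (γ ++ α) ++ β.take (j - (g+κ)) := by
    intro j hj hj'
    rw [hπ', List.take_append]
    rw [List.take_of_length_le (by omega), hgal, List.take_append]
    have : j - (g + κ) - β.length = 0 := by omega
    rw [this, List.take_zero, List.append_nil]
  have B2 : ∀ j, g + κ ≤ j → j ≤ g + κ + b → π.drop j = β.drop (j - (g+κ)) ++ τ := by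
    intro j hj hj'
    rw [hπ', List.drop_append]
    rw [List.drop_of_length_le (by omega), hgal, List.nil_append,
      List.drop_append]
    have : j - (g + κ) - β.length = 0 := by omega
    rw [this, List.drop_zero]
  set β' := β.take i₁ ++ β.drop i₂ with hβ'
  set π' := π.take j₁ ++ π.drop j₂ with hπ'd
  have hβ'l : β'.length = i₁ + (b - i₂) := by simp [hβ']; omega
  have ht1 : π.take j₁ = (γ ++ α) ++ β.take i₁ := B1 j₁ hj1 (by omega)
  have ht2 : π.take j₂ = (γ ++ α) ++ β.take i₂ := B1 j₂ (by omega) (by omega)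
  have hd2 : π.drop j₂ = β.drop i₂ ++ τ := B2 j₂ (by omega) (by omega)
  have cond1 : π' = γ ++ α ++ β' ++ ovr bar α ++ ovr bar γ := by
    rw [hπ'd, ht1, hd2, hβ', hτ]
    simp [List.append_assoc]
  set x : List σ := γ ++ α ++ β ++ ovr bar α with hx
  set x' : List σ := γ ++ α ++ β' ++ ovr bar α with hx'
  set sx : List σ := β.drop i₂ ++ ovr bar α with hsx
  have hxdec : x = π.take j₂ ++ sx := by
    rw [hx, ht2, hsx]
    simp only [List.append_assoc]
    rw [← List.append_assoc (List.take i₂ β), List.take_append_drop]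
  have hx'dec : x' = π.take j₁ ++ sx := by
    rw [hx', ht1, hsx, hβ']
    simp [List.append_assoc]
  have C1 : M1.eval x' = M1.eval x := by
    rw [hxdec, hx'dec, evapp1 (π.take j₁) sx, evapp1 (π.take j₂) sx, hq]
  set y : List σ := α ++ β ++ ovr bar α ++ ovr bar γ with hy
  set y' : List σ := α ++ β' ++ ovr bar α ++ ovr bar γ with hy'
  have hπγ : π = γ ++ y := by rw [hπ, hx, hy]; simp [List.append_assoc]
  have hπ'γ : π' = γ ++ y' := by rw [cond1, hx', hy']; simp [List.append_assoc]
  have hydrop : π.drop g = y := by rw [hπγ, hgd, List.drop_left]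
  have hy'drop : π'.drop g = y' := by rw [hπ'γ, hgd, List.drop_left]
  have hydec : y = (π.drop g).take (j₂ - g) ++ π.drop j₂ := by
    rw [← hydrop]
    have h0 : (π.drop g).drop (j₂ - g) = π.drop j₂ := by
      rw [List.drop_drop]
      congr 1
      omega
    rw [← h0, List.take_append_drop]
  have hy'dec : y' = (π.drop g).take (j₁ - g) ++ π.drop j₂ := by
    rw [← hy'drop, hπ'd, List.drop_append]
    have h1 : (π.take j₁).length = j₁ := by simp; omega
    have h2 : g - (π.take j₁).length = 0 := by rw [h1]; omega
    rw [h2, List.drop_zero, List.drop_take]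
  have C2 : M2.evalFrom M2.start y' = M2.evalFrom M2.start y := by
    rw [hydec, hy'dec, evapp2 ((π.drop g).take (j₁ - g)) (π.drop j₂),
      evapp2 ((π.drop g).take (j₂ - g)) (π.drop j₂), hr]
  have cond3 : (γ ++ α ++ β' ++ ovr bar α ∈ L1 ∨ α ++ β' ++ ovr bar α ++ ovr bar γ ∈ L2) := by
    rcases h3 with h | h
    · left
      rw [← hx']
      rw [← hM1, DFA.mem_accepts] at h ⊢
      rw [C1]; exact h
    · right
      rw [← hy']
      rw [← hM2, DFA.mem_accepts] at h ⊢
      rw [eval_def] at h ⊢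
      rw [C2]; exact h
  have hxpre : π = x ++ ovr bar γ := by rw [hπ]
  have hx'pre : π' = x' ++ ovr bar γ := by rw [cond1, hx']
  have hxl : x.length = g + κ + b + κ := by simp [hx, ovr_length, hαl]; omega
  have hx'l : x'.length = g + κ + β'.length + κ := by simp [hx', ovr_length, hαl]; omega
  have hπ'l : π'.length = j₁ + (n - j₂) := by
    simp [hπ'd]
    omega
  refine ⟨cond1, hαl, cond3, ?_, ?_⟩
  · -- cond4
    intro u hu huL1
    rw [← hx']
    rcases le_or_gt u.length x'.length with hle | hlt
    · exact List.prefix_of_prefix_length_le hu (by rw [hx'pre]; exact ⟨ovr bar γ, rfl⟩) hle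
    · exfalso
      set j := u.length - x'.length with hj
      have hj1' : 1 ≤ j := by omega
      have hjg : j ≤ g := by
        have h6 := hu.length_le
        omega
      have huval : u = π'.take u.length := List.prefix_iff_eq_take.mp hu
      have hD1 : π'.take u.length = x' ++ (ovr bar γ).take j := by
        rw [hx'pre, List.take_append,
          List.take_of_length_le (by omega)]
        all_goals (first | rfl | (congr 1; congr 1; omega))
      have hD2 : π.take (x.length + j) = x ++ (ovr bar γ).take j := by
        rw [hxpre, List.take_append,
          List.take_of_length_le (by omega)]
        all_goals (first | rfl | (congr 1; congr 1; omega))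
      have heval : M1.eval u = M1.eval (π.take (x.length + j)) := by
        rw [huval, hD1, hD2, evapp1 x' ((ovr bar γ).take j),
          evapp1 x ((ovr bar γ).take j), C1]
      have hnotin : π.take (x.length + j) ∉ L1 := by
        intro hin
        have hpre : π.take (x.length + j) <+: π := List.take_prefix _ _
        have hlen4 := (h4 _ hpre hin).length_le
        have hfold : (γ ++ α ++ β ++ ovr bar α).length = x.length := by rw [hx]
        have hlen2 : (π.take (x.length + j)).length = x.length + j := by
          simp
          omega
        omega
      apply hnotin
      rw [← hM1, DFA.mem_accepts] at huL1 ⊢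
      rw [← heval]; exact huL1
  · -- cond5
    intro u hu huL2
    rw [← hy']
    have hy'l : y'.length = π'.length - g := by
      rw [hπ'γ]; simp; omega
    rcases le_or_gt u.length y'.length with hle | hlt
    · exact suffix_of_suffix_length_le hu (by rw [hπ'γ]; exact ⟨γ, rfl⟩) hle
    · exfalso
      set i := π'.length - u.length with hi
      have hig : i < g := by
        have h6 := hu.length_le
        omega
      have huval : u = π'.drop i := by
        rw [hi]
        exact List.suffix_iff_eq_drop.mp hu
      have hE1 : π'.drop i = (π.drop i).take (j₁ - i) ++ π.drop j₂ := by
        rw [hπ'd, List.drop_append]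
        have h1 : (π.take j₁).length = j₁ := by simp; omega
        have h2 : i - (π.take j₁).length = 0 := by rw [h1]; omega
        rw [h2, List.drop_zero, List.drop_take]
      obtain ⟨i', hi'g, heq⟩ := hS i hig
      have hE2 : π.drop i' = (π.drop i').take (j₂ - i') ++ π.drop j₂ := by
        have h0 : (π.drop i').drop (j₂ - i') = π.drop j₂ := by
          rw [List.drop_drop]
          congr 1
          omega
        rw [← h0, List.take_append_drop]
      have heval : M2.evalFrom M2.start u = M2.evalFrom M2.start (π.drop i') := by
        rw [huval, hE1]
        conv_rhs => rw [hE2]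
        rw [evapp2 ((π.drop i).take (j₁ - i)) (π.drop j₂),
          evapp2 ((π.drop i').take (j₂ - i')) (π.drop j₂), heq]
      have hnotin : π.drop i' ∉ L2 := by
        intro hin
        have hsuf : π.drop i' <:+ π := List.drop_suffix _ _
        have hlen3 := (h5 _ hsuf hin).length_le
        have hfold : (α ++ β ++ ovr bar α ++ ovr bar γ).length = y.length := by rw [hy]
        have hyl : y.length = κ + b + κ + g := by
          rw [hy]; simp [ovr_length, hαl]; omega
        have e1 : (π.drop i').length = n - i' := by simp [hnd]
        omega
      apply hnotin
      rw [← hM2, DFA.mem_accepts] at huL2 ⊢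
      rw [eval_def] at huL2 ⊢
      rw [← heval]; exact huL2


theorem evalFrom_shorten {Q : Type} [Fintype Q] (M : DFA σ Q) (q : Q) (z : List σ) :
    ∃ z' : List σ, z'.length < Fintype.card Q ∧ M.evalFrom q z' = M.evalFrom q z := by
  have hcard : 0 < Fintype.card Q := Fintype.card_pos_iff.mpr ⟨q⟩
  suffices H : ∀ N : ℕ, ∀ z : List σ, z.length ≤ N →
      ∃ z' : List σ, z'.length < Fintype.card Q ∧ M.evalFrom q z' = M.evalFrom q z from
    H z.length z le_rfl
  intro N
  induction N with
  | zero =>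
      intro z hz
      exact ⟨z, by omega, rfl⟩
  | succ N ih =>
      intro z hz
      by_cases hlt : z.length < Fintype.card Q
      · exact ⟨z, hlt, rfl⟩
      · push_neg at hlt
        have key : ∀ a c : Fin (Fintype.card Q + 1), (a : ℕ) < (c : ℕ) →
            M.evalFrom q (z.take a) = M.evalFrom q (z.take c) →
            ∃ z' : List σ, z'.length < Fintype.card Q ∧
              M.evalFrom q z' = M.evalFrom q z := by
          intro a c hac heq2
          have hc : (c : ℕ) ≤ z.length := by
            have := c.isLt
            omega
          have heval : M.evalFrom q (z.take a ++ z.drop c) = M.evalFrom q z := by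
            rw [DFA.evalFrom_of_append, heq2]
            conv_rhs => rw [← List.take_append_drop (c : ℕ) z]
            rw [DFA.evalFrom_of_append]
          have hlen2 : (z.take a ++ z.drop c).length ≤ N := by
            simp
            omega
          obtain ⟨z', h1, h2⟩ := ih _ hlen2
          exact ⟨z', h1, h2.trans heval⟩
        obtain ⟨a, c, hne, heq⟩ := Fintype.exists_ne_map_eq_of_card_lt
          (fun i : Fin (Fintype.card Q + 1) => M.evalFrom q (z.take i)) (by simp)
        rcases Ne.lt_or_gt hne with h | h
        · exact key a c (by exact_mod_cast h) heq
        · exact key c a (by exact_mod_cast h) heq.symm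

theorem key2_prefix {Q1 Q2 : Type} [Fintype Q1] [Fintype Q2] (M1 : DFA σ Q1) (M2 : DFA σ Q2)
    {bar : σ → σ} {κ : ℕ} {L1 L2 : Language σ}
    (hM1 : M1.accepts = L1) (hM2 : M2.accepts = L2) :
    ∀ n : ℕ, ∀ π γ α β w : List σ, π.length ≤ n →
      CanonFact bar κ L1 L2 π γ α β →
      γ.length + κ ≤ w.length →
      w <+: γ ++ α ++ β ++ ovr bar α →
      ∃ π' γ' α' β', CanonFact bar κ L1 L2 π' γ' α' β' ∧
        γ'.length + κ ≤ w.length ∧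
        w <+: γ' ++ α' ++ β' ++ ovr bar α' ∧
        (γ' ++ α' ++ β' ++ ovr bar α').length
          ≤ w.length + (Nat.card (Q1 × Q2 × Set Q2) + κ + 1) := by
  intro n
  induction n with
  | zero =>
      intro π γ α β w hn cf hgm hw
      refine ⟨π, γ, α, β, cf, hgm, hw, ?_⟩
      have h1 : π = (γ ++ α ++ β ++ ovr bar α) ++ ovr bar γ := by rw [cf.1]
      have h2 : (γ ++ α ++ β ++ ovr bar α).length ≤ π.length := by
        rw [h1]; simp
      omega
  | succ n ih =>
      intro π γ α β w hn cf hgm hw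
      set C0 := Nat.card (Q1 × Q2 × Set Q2) with hC0
      by_cases hsmall : (γ ++ α ++ β ++ ovr bar α).length ≤ w.length + (C0 + κ + 1)
      · exact ⟨π, γ, α, β, cf, hgm, hw, hsmall⟩
      · push_neg at hsmall
        obtain ⟨hπ, hαl, h3, h4, h5⟩ := id cf
        set g := γ.length with hg
        set b := β.length with hb
        set m := w.length with hm
        have hXlen : (γ ++ α ++ β ++ ovr bar α).length = g + κ + b + κ := by
          simp [ovr_length, hαl]; omega
        have hπlen : π.length = g + κ + b + κ + g := by
          rw [hπ]; simp [ovr_length, hαl]; omega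
        rw [hXlen] at hsmall
        letI : Fintype (Set Q2) := Fintype.ofFinite _
        letI : Fintype (Q1 × Q2 × Set Q2) := inferInstance
        have hC0' : C0 = Fintype.card (Q1 × Q2 × Set Q2) := by
          rw [hC0, Nat.card_eq_fintype_card]
        set Φ : ℕ → Q1 × Q2 × Set Q2 := fun j =>
          (M1.eval (π.take j), M2.evalFrom M2.start ((π.drop g).take (j - g)),
            {s | ∃ i < g, s = M2.evalFrom M2.start ((π.drop i).take (j - i))}) with hΦ
        have key : ∀ a c : Fin (C0 + 1), (a : ℕ) < (c : ℕ) →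
            Φ (m + 1 + a) = Φ (m + 1 + c) →
            ∃ π' γ' α' β', CanonFact bar κ L1 L2 π' γ' α' β' ∧
              γ'.length + κ ≤ w.length ∧
              w <+: γ' ++ α' ++ β' ++ ovr bar α' ∧
              (γ' ++ α' ++ β' ++ ovr bar α').length ≤ w.length + (C0 + κ + 1) := by
          intro a c hac heq
          set j₁ := m + 1 + (a : ℕ) with hj₁
          set j₂ := m + 1 + (c : ℕ) with hj₂
          have hc1 : (c : ℕ) ≤ C0 := by have := c.isLt; omega
          have hj1 : g + κ ≤ j₁ := by omega
          have hj12 : j₁ < j₂ := by omega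
          have hj2 : j₂ ≤ g + κ + b := by omega
          have hq : M1.eval (π.take j₁) = M1.eval (π.take j₂) :=
            congrArg Prod.fst heq
          have hr : M2.evalFrom M2.start ((π.drop g).take (j₁ - g))
              = M2.evalFrom M2.start ((π.drop g).take (j₂ - g)) :=
            congrArg (fun p => p.2.1) heq
          have hSet : {s | ∃ i < g, s = M2.evalFrom M2.start ((π.drop i).take (j₁ - i))}
              = {s | ∃ i < g, s = M2.evalFrom M2.start ((π.drop i).take (j₂ - i))} :=
            congrArg (fun p => p.2.2) heq
          have hS : ∀ i < g, ∃ i' < g,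
              M2.evalFrom M2.start ((π.drop i).take (j₁ - i))
                = M2.evalFrom M2.start ((π.drop i').take (j₂ - i')) := by
            intro i hi
            have hmem : M2.evalFrom M2.start ((π.drop i).take (j₁ - i))
                ∈ {s | ∃ i < g, s = M2.evalFrom M2.start ((π.drop i).take (j₁ - i))} :=
              ⟨i, hi, rfl⟩
            rw [hSet] at hmem
            obtain ⟨i', hi', he⟩ := hmem
            exact ⟨i', hi', he⟩
          have cf2 := core_cut M1 M2 hM1 hM2 cf hj1 hj12 hj2 hq hr hS
          have hπ'len : (π.take j₁ ++ π.drop j₂).length = j₁ + (π.length - j₂) := by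
            simp
            omega
          have hwπ : w = π.take m := by
            have h6 : w <+: π := hw.trans (by rw [hπ]; exact List.prefix_append _ _)
            exact List.prefix_iff_eq_take.mp h6
          have hwpre : w <+: π.take j₁ ++ π.drop j₂ := by
            have h7 : w <+: π.take j₁ := by
              rw [hwπ]
              have h8 : π.take m = (π.take j₁).take m := by
                rw [List.take_take]
                congr 1
                omega
              rw [h8]
              exact List.take_prefix _ _
            exact h7.trans (List.prefix_append _ _)
          have hβ'len : (β.take (j₁ - (g + κ)) ++ β.drop (j₂ - (g + κ))).length
              = (j₁ - (g+κ)) + (b - (j₂ - (g+κ))) := by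
            simp
            omega
          have hwpre2 : w <+: γ ++ α ++ (β.take (j₁ - (g + κ)) ++ β.drop (j₂ - (g + κ)))
              ++ ovr bar α := by
            apply List.prefix_of_prefix_length_le hwpre
              (by rw [cf2.1]; exact List.prefix_append _ _)
            simp only [List.length_append, ovr_length, hαl, hβ'len]
            omega
          exact ih (π.take j₁ ++ π.drop j₂) γ α _ w
            (by rw [hπ'len]; omega) cf2 hgm hwpre2
        obtain ⟨a, c, hne, heqac⟩ := Fintype.exists_ne_map_eq_of_card_lt
          (fun i : Fin (C0 + 1) => Φ (m + 1 + i)) (by rw [Fintype.card_fin, ← hC0']; omega)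
        rcases Ne.lt_or_gt hne with h | h
        · exact key a c (by exact_mod_cast h) heqac
        · exact key c a (by exact_mod_cast h) heqac.symm

theorem key2_suffix {Q1 Q2 : Type} [Fintype Q1] [Fintype Q2] (M1 : DFA σ Q1) (M2 : DFA σ Q2)
    {bar : σ → σ} {κ : ℕ} {L1 L2 : Language σ}
    (hM1 : M1.accepts = L1) (hM2 : M2.accepts = L2) :
    ∀ n : ℕ, ∀ π γ α β w : List σ, π.length ≤ n →
      CanonFact bar κ L1 L2 π γ α β →
      γ.length + κ ≤ w.length →
      w <:+ α ++ β ++ ovr bar α ++ ovr bar γ →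
      ∃ π' γ' α' β', CanonFact bar κ L1 L2 π' γ' α' β' ∧
        γ'.length + κ ≤ w.length ∧
        w <:+ α' ++ β' ++ ovr bar α' ++ ovr bar γ' ∧
        (α' ++ β' ++ ovr bar α' ++ ovr bar γ').length
          ≤ w.length + (Nat.card (Q1 × Q2 × Set Q2) + κ + 1) := by
  intro n
  induction n with
  | zero =>
      intro π γ α β w hn cf hgm hw
      refine ⟨π, γ, α, β, cf, hgm, hw, ?_⟩
      have h1 : π = γ ++ (α ++ β ++ ovr bar α ++ ovr bar γ) := by
        rw [cf.1]; simp [List.append_assoc]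
      have h2 : (α ++ β ++ ovr bar α ++ ovr bar γ).length ≤ π.length := by
        rw [h1]; simp
      omega
  | succ n ih =>
      intro π γ α β w hn cf hgm hw
      set C0 := Nat.card (Q1 × Q2 × Set Q2) with hC0
      by_cases hsmall : (α ++ β ++ ovr bar α ++ ovr bar γ).length ≤ w.length + (C0 + κ + 1)
      · exact ⟨π, γ, α, β, cf, hgm, hw, hsmall⟩
      · push_neg at hsmall
        obtain ⟨hπ, hαl, h3, h4, h5⟩ := id cf
        set g := γ.length with hg
        set b := β.length with hb
        set m := w.length with hm
        have hYlen : (α ++ β ++ ovr bar α ++ ovr bar γ).length = κ + b + κ + g := by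
          simp [ovr_length, hαl]; omega
        have hπlen : π.length = g + κ + b + κ + g := by
          rw [hπ]; simp [ovr_length, hαl]; omega
        rw [hYlen] at hsmall
        letI : Fintype (Set Q2) := Fintype.ofFinite _
        letI : Fintype (Q1 × Q2 × Set Q2) := inferInstance
        have hC0' : C0 = Fintype.card (Q1 × Q2 × Set Q2) := by
          rw [hC0, Nat.card_eq_fintype_card]
        set Φ : ℕ → Q1 × Q2 × Set Q2 := fun j =>
          (M1.eval (π.take j), M2.evalFrom M2.start ((π.drop g).take (j - g)),
            {s | ∃ i < g, s = M2.evalFrom M2.start ((π.drop i).take (j - i))}) with hΦ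
        have key : ∀ a c : Fin (C0 + 1), (a : ℕ) < (c : ℕ) →
            Φ (g + κ + 1 + a) = Φ (g + κ + 1 + c) →
            ∃ π' γ' α' β', CanonFact bar κ L1 L2 π' γ' α' β' ∧
              γ'.length + κ ≤ w.length ∧
              w <:+ α' ++ β' ++ ovr bar α' ++ ovr bar γ' ∧
              (α' ++ β' ++ ovr bar α' ++ ovr bar γ').length ≤ w.length + (C0 + κ + 1) := by
          intro a c hac heq
          set j₁ := g + κ + 1 + (a : ℕ) with hj₁
          set j₂ := g + κ + 1 + (c : ℕ) with hj₂
          have hc1 : (c : ℕ) ≤ C0 := by have := c.isLt; omega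
          have hj1 : g + κ ≤ j₁ := by omega
          have hj12 : j₁ < j₂ := by omega
          have hj2 : j₂ ≤ g + κ + b := by omega
          have hj2m : j₂ ≤ π.length - m := by omega
          have hq : M1.eval (π.take j₁) = M1.eval (π.take j₂) :=
            congrArg Prod.fst heq
          have hr : M2.evalFrom M2.start ((π.drop g).take (j₁ - g))
              = M2.evalFrom M2.start ((π.drop g).take (j₂ - g)) :=
            congrArg (fun p => p.2.1) heq
          have hSet : {s | ∃ i < g, s = M2.evalFrom M2.start ((π.drop i).take (j₁ - i))}
              = {s | ∃ i < g, s = M2.evalFrom M2.start ((π.drop i).take (j₂ - i))} :=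
            congrArg (fun p => p.2.2) heq
          have hS : ∀ i < g, ∃ i' < g,
              M2.evalFrom M2.start ((π.drop i).take (j₁ - i))
                = M2.evalFrom M2.start ((π.drop i').take (j₂ - i')) := by
            intro i hi
            have hmem : M2.evalFrom M2.start ((π.drop i).take (j₁ - i))
                ∈ {s | ∃ i < g, s = M2.evalFrom M2.start ((π.drop i).take (j₁ - i))} :=
              ⟨i, hi, rfl⟩
            rw [hSet] at hmem
            obtain ⟨i', hi', he⟩ := hmem
            exact ⟨i', hi', he⟩
          have cf2 := core_cut M1 M2 hM1 hM2 cf hj1 hj12 hj2 hq hr hS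
          have hπ'len : (π.take j₁ ++ π.drop j₂).length = j₁ + (π.length - j₂) := by
            simp
            omega
          have hβ'len : (β.take (j₁ - (g + κ)) ++ β.drop (j₂ - (g + κ))).length
              = (j₁ - (g+κ)) + (b - (j₂ - (g+κ))) := by
            simp
            omega
          have hwsufπ : w <:+ π := by
            apply hw.trans
            rw [hπ]
            simp only [List.append_assoc]
            exact List.suffix_append _ _
          have hwdrop : w <:+ π.drop j₂ := by
            apply suffix_of_suffix_length_le hwsufπ (List.drop_suffix _ _)
            simp
            omega
          have hwsuf' : w <:+ π.take j₁ ++ π.drop j₂ :=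
            hwdrop.trans (List.suffix_append _ _)
          have hwsuf2 : w <:+ α ++ (β.take (j₁ - (g + κ)) ++ β.drop (j₂ - (g + κ)))
              ++ ovr bar α ++ ovr bar γ := by
            apply suffix_of_suffix_length_le hwsuf'
              (by rw [cf2.1]; simp only [List.append_assoc]; exact List.suffix_append _ _)
            simp only [List.length_append, ovr_length, hαl, hβ'len]
            omega
          exact ih (π.take j₁ ++ π.drop j₂) γ α _ w
            (by rw [hπ'len]; omega) cf2 hgm hwsuf2
        obtain ⟨a, c, hne, heqac⟩ := Fintype.exists_ne_map_eq_of_card_lt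
          (fun i : Fin (C0 + 1) => Φ (g + κ + 1 + i)) (by rw [Fintype.card_fin, ← hC0']; omega)
        rcases Ne.lt_or_gt hne with h | h
        · exact key a c (by exact_mod_cast h) heqac
        · exact key c a (by exact_mod_cast h) heqac.symm


theorem canonfact_mem_H {bar : σ → σ} {κ : ℕ} {L1 L2 : Language σ} {π γ α β : List σ}
    (cf : CanonFact bar κ L1 L2 π γ α β) : π ∈ hairpinCompletion bar κ L1 L2 :=
  ⟨γ, α, β, cf.1, le_of_eq cf.2.1.symm, cf.2.2.1⟩

/-- Every word of `L1` sits inside an almost tight canonical left part. -/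
theorem hard_L1 {Q1 Q2 : Type} [Fintype Q1] [Fintype Q2] (M1 : DFA σ Q1) (M2 : DFA σ Q2)
    {bar : σ → σ} {κ : ℕ} {L1 L2 : Language σ}
    (hM1 : M1.accepts = L1) (hM2 : M2.accepts = L2)
    {w : List σ} (hwL1 : w ∈ L1)
    (hdec : ∃ u αd v : List σ, αd.length = κ ∧ w = u ++ αd ++ v ++ ovr bar αd) :
    ∃ p q : List σ, p ∈ MGP bar κ L1 L2 ∧ q ∈ Mid bar κ L1 L2 ∧
      w.length ≤ p.length + q.length + κ ∧
      p.length + q.length + κ ≤ w.length + (Nat.card (Q1 × Q2 × Set Q2) + κ + 1) ∧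
      w = (p ++ q ++ ovr bar (p.drop (p.length - κ))).take w.length := by
  obtain ⟨u, αd, v, hαd, hwdec⟩ := hdec
  set π₀ := w ++ ovr bar u with hπ₀
  have hπ₀eq : π₀ = u ++ αd ++ v ++ ovr bar αd ++ ovr bar u := by
    rw [hπ₀, hwdec]
  have hwit : u ++ αd ++ v ++ ovr bar αd ∈ L1 ∨
      αd ++ v ++ ovr bar αd ++ ovr bar u ∈ L2 := by
    left; rw [← hwdec]; exact hwL1
  obtain ⟨γ, α, β, cf⟩ := key1 hπ₀eq (le_of_eq hαd.symm) hwit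
  have hwpre : w <+: π₀ := ⟨ovr bar u, rfl⟩
  have hwx : w <+: γ ++ α ++ β ++ ovr bar α := cf.2.2.2.1 w hwpre hwL1
  have hαl : α.length = κ := cf.2.1
  have hlens : π₀.length = γ.length + κ + β.length + κ + γ.length := by
    rw [cf.1]; simp [ovr_length, hαl]; omega
  have hπ₀len : π₀.length = w.length + u.length := by
    rw [hπ₀]; simp [ovr_length]
  have hwlen : w.length = u.length + κ + v.length + κ := by
    rw [hwdec]; simp [ovr_length, hαd]; omega
  have hxw := hwx.length_le
  have hxlen : (γ ++ α ++ β ++ ovr bar α).length = γ.length + κ + β.length + κ := by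
    simp [ovr_length, hαl]; omega
  have hgm : γ.length + κ ≤ w.length := by omega
  obtain ⟨π', γ', α', β', cf', hgm', hw', hlen'⟩ :=
    key2_prefix M1 M2 hM1 hM2 π₀.length π₀ γ α β w le_rfl cf hgm hwx
  have hα'l : α'.length = κ := cf'.2.1
  refine ⟨γ' ++ α', β', ⟨π', γ', α', β', canonfact_mem_H cf', cf', rfl⟩,
    ⟨π', γ', α', canonfact_mem_H cf', cf'⟩, ?_, ?_, ?_⟩
  · have := hw'.length_le
    simp only [List.length_append, ovr_length, hα'l] at this ⊢
    omega
  · simp only [List.length_append, ovr_length, hα'l] at hlen' ⊢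
    omega
  · have hdropp : (γ' ++ α').drop ((γ' ++ α').length - κ) = α' := by
      have h9 : (γ' ++ α').length - κ = γ'.length := by simp [hα'l]
      rw [h9, List.drop_left]
    rw [hdropp]
    have h10 : γ' ++ α' ++ β' ++ ovr bar α' = (γ' ++ α') ++ β' ++ ovr bar α' := by
      simp [List.append_assoc]
    rw [← h10]
    exact List.prefix_iff_eq_take.mp hw'

/-- Every word of `L2` sits inside an almost tight canonical right part. -/
theorem hard_L2 {Q1 Q2 : Type} [Fintype Q1] [Fintype Q2] (M1 : DFA σ Q1) (M2 : DFA σ Q2)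
    {bar : σ → σ} (hbar : ∀ a, bar (bar a) = a) {κ : ℕ} {L1 L2 : Language σ}
    (hM1 : M1.accepts = L1) (hM2 : M2.accepts = L2)
    {w : List σ} (hwL2 : w ∈ L2)
    (hdec : ∃ αd u v : List σ, αd.length = κ ∧ w = αd ++ u ++ ovr bar αd ++ v) :
    ∃ p q : List σ, p ∈ MGP bar κ L1 L2 ∧ q ∈ Mid bar κ L1 L2 ∧
      w.length ≤ p.length + q.length + κ ∧
      p.length + q.length + κ ≤ w.length + (Nat.card (Q1 × Q2 × Set Q2) + κ + 1) ∧
      w = (p.drop (p.length - κ) ++ q ++ ovr bar p).drop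
        (p.length + q.length + κ - w.length) := by
  obtain ⟨αd, u, v, hαd, hwdec⟩ := hdec
  set π₀ := ovr bar v ++ w with hπ₀
  have hπ₀eq : π₀ = ovr bar v ++ αd ++ u ++ ovr bar αd ++ ovr bar (ovr bar v) := by
    rw [hπ₀, hwdec, ovr_ovr bar hbar]
    simp [List.append_assoc]
  have hwit : ovr bar v ++ αd ++ u ++ ovr bar αd ∈ L1 ∨
      αd ++ u ++ ovr bar αd ++ ovr bar (ovr bar v) ∈ L2 := by
    right; rw [ovr_ovr bar hbar, ← hwdec]
    exact hwL2
  obtain ⟨γ, α, β, cf⟩ := key1 hπ₀eq (le_of_eq hαd.symm) hwit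
  have hwsuf : w <:+ π₀ := ⟨ovr bar v, rfl⟩
  have hwy : w <:+ α ++ β ++ ovr bar α ++ ovr bar γ := cf.2.2.2.2 w hwsuf hwL2
  have hαl : α.length = κ := cf.2.1
  have hπ₀len : π₀.length = w.length + v.length := by
    rw [hπ₀]; simp [ovr_length]; omega
  have hlens : π₀.length = γ.length + κ + β.length + κ + γ.length := by
    rw [cf.1]; simp [ovr_length, hαl]; omega
  have hwlen : w.length = κ + u.length + κ + v.length := by
    rw [hwdec]; simp [ovr_length, hαd]; omega
  have hyw := hwy.length_le
  have hylen : (α ++ β ++ ovr bar α ++ ovr bar γ).length = κ + β.length + κ + γ.length := by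
    simp [ovr_length, hαl]; omega
  have hgm : γ.length + κ ≤ w.length := by omega
  obtain ⟨π', γ', α', β', cf', hgm', hw', hlen'⟩ :=
    key2_suffix M1 M2 hM1 hM2 π₀.length π₀ γ α β w le_rfl cf hgm hwy
  have hα'l : α'.length = κ := cf'.2.1
  refine ⟨γ' ++ α', β', ⟨π', γ', α', β', canonfact_mem_H cf', cf', rfl⟩,
    ⟨π', γ', α', canonfact_mem_H cf', cf'⟩, ?_, ?_, ?_⟩
  · have := hw'.length_le
    simp only [List.length_append, ovr_length, hα'l] at this ⊢
    omega
  · simp only [List.length_append, ovr_length, hα'l] at hlen' ⊢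
    omega
  · have hdropp : (γ' ++ α').drop ((γ' ++ α').length - κ) = α' := by
      have h9 : (γ' ++ α').length - κ = γ'.length := by simp [hα'l]
      rw [h9, List.drop_left]
    rw [hdropp]
    have h10 : α' ++ β' ++ ovr bar α' ++ ovr bar γ'
        = α' ++ β' ++ ovr bar (γ' ++ α') := by
      rw [ovr_append]; simp [List.append_assoc]
    have h11 := List.suffix_iff_eq_drop.mp hw'
    rw [h10] at h11
    have h12 : (α' ++ β' ++ ovr bar (γ' ++ α')).length
        = (γ' ++ α').length + β'.length + κ := by
      simp [ovr_length, hα'l]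
      omega
    rw [h12] at h11
    exact h11

/-- Every word of MGP is a short prefix-extension of an `L1`-word or مirror of `L2`. -/
theorem easy_MGP {Q1 Q2 : Type} [Fintype Q1] [Fintype Q2] (M1 : DFA σ Q1) (M2 : DFA σ Q2)
    {bar : σ → σ} {κ : ℕ} {L1 L2 : Language σ}
    (hM1 : M1.accepts = L1) (hM2 : M2.accepts = L2)
    {p : List σ} (hp : p ∈ MGP bar κ L1 L2) :
    (∃ w' ∈ L1, p <+: w' ∧ w'.length < p.length + Fintype.card Q1) ∨
    (∃ w' ∈ L2, ovr bar p <:+ w' ∧ w'.length < p.length + Fintype.card Q2) := by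
  obtain ⟨π, γ, α, β, hH, cf, hpeq⟩ := hp
  obtain ⟨hπ, hαl, h3, h4, h5⟩ := cf
  rcases h3 with h | h
  · left
    have hx : γ ++ α ++ β ++ ovr bar α = (γ ++ α) ++ (β ++ ovr bar α) := by
      simp [List.append_assoc]
    obtain ⟨z', hz'len, hz'⟩ := evalFrom_shorten M1 (M1.eval (γ ++ α)) (β ++ ovr bar α)
    refine ⟨(γ ++ α) ++ z', ?_, by rw [hpeq]; exact List.prefix_append _ _, ?_⟩
    · rw [← hM1, DFA.mem_accepts] at h ⊢
      rw [eval_def, DFA.evalFrom_of_append, ← eval_def, hz']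
      rw [hx] at h
      rw [eval_def, DFA.evalFrom_of_append, ← eval_def] at h
      exact h
    · simp [hpeq]
      omega
  · right
    have hy : α ++ β ++ ovr bar α ++ ovr bar γ = (α ++ β) ++ (ovr bar α ++ ovr bar γ) := by
      simp [List.append_assoc]
    have hovrp : ovr bar p = ovr bar α ++ ovr bar γ := by
      rw [hpeq, ovr_append]
    obtain ⟨z', hz'len, hz'⟩ := evalFrom_shorten M2 M2.start (α ++ β)
    refine ⟨z' ++ ovr bar p, ?_, List.suffix_append _ _, ?_⟩
    · rw [← hM2, DFA.mem_accepts] at h ⊢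
      rw [eval_def, DFA.evalFrom_of_append, hz']
      rw [hy] at h
      rw [eval_def, DFA.evalFrom_of_append] at h
      rw [hovrp]
      exact h
    · simp [ovr_length, hpeq]
      omega

/-- Every word of Mid is a middle factor of a short `L1`- or `L2`-word. -/
theorem easy_Mid {Q1 Q2 : Type} [Fintype Q1] [Fintype Q2] (M1 : DFA σ Q1) (M2 : DFA σ Q2)
    {bar : σ → σ} {κ : ℕ} {L1 L2 : Language σ}
    (hM1 : M1.accepts = L1) (hM2 : M2.accepts = L2)
    {q : List σ} (hq : q ∈ Mid bar κ L1 L2) :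
    ∃ w' k₁ k₂, (w' ∈ L1 ∨ w' ∈ L2) ∧ k₁ < Fintype.card Q1 + Fintype.card Q2 ∧
      k₂ < Fintype.card Q1 + Fintype.card Q2 ∧
      w'.length = k₁ + q.length + k₂ ∧
      q = (w'.drop k₁).take (w'.length - k₁ - k₂) := by
  obtain ⟨π, γ, α, hH, cf⟩ := hq
  obtain ⟨hπ, hαl, h3, h4, h5⟩ := cf
  have hcard1 : 0 < Fintype.card Q1 := Fintype.card_pos_iff.mpr ⟨M1.start⟩
  have hcard2 : 0 < Fintype.card Q2 := Fintype.card_pos_iff.mpr ⟨M2.start⟩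
  rcases h3 with h | h
  · obtain ⟨z₂, hz₂len, hz₂⟩ := evalFrom_shorten M1
      (M1.evalFrom (M1.evalFrom M1.start (γ ++ α)) q) (ovr bar α)
    obtain ⟨z₁, hz₁len, hz₁⟩ := evalFrom_shorten M1 M1.start (γ ++ α)
    refine ⟨z₁ ++ (q ++ z₂), z₁.length, z₂.length, Or.inl ?_, by omega, by omega, ?_, ?_⟩
    · rw [← hM1, DFA.mem_accepts]
      rw [eval_def, DFA.evalFrom_of_append, hz₁, DFA.evalFrom_of_append, hz₂]
      have h' : M1.eval ((γ ++ α) ++ q ++ ovr bar α) ∈ M1.accept := by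
        rw [← DFA.mem_accepts, hM1]
        have e1 : (γ ++ α) ++ q ++ ovr bar α = γ ++ α ++ q ++ ovr bar α := by
          simp [List.append_assoc]
        rw [e1]; exact h
      rw [eval_def, DFA.evalFrom_of_append, DFA.evalFrom_of_append] at h'
      exact h'
    · simp only [List.length_append]
      omega
    · rw [List.drop_left]
      have e4 : (z₁ ++ (q ++ z₂)).length - z₁.length - z₂.length = q.length := by
        simp only [List.length_append]
        omega
      rw [e4, List.take_left]
  · obtain ⟨z₂, hz₂len, hz₂⟩ := evalFrom_shorten M2
      (M2.evalFrom (M2.evalFrom M2.start α) q) (ovr bar α ++ ovr bar γ)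
    obtain ⟨z₁, hz₁len, hz₁⟩ := evalFrom_shorten M2 M2.start α
    refine ⟨z₁ ++ (q ++ z₂), z₁.length, z₂.length, Or.inr ?_, by omega, by omega, ?_, ?_⟩
    · have ev2 : ∀ (t s : List σ) (st : Q2),
          M2.evalFrom st (t ++ s) = M2.evalFrom (M2.evalFrom st t) s :=
        fun t s st => DFA.evalFrom_of_append M2 st t s
      rw [← hM2, DFA.mem_accepts]
      rw [eval_def, ev2 z₁ (q ++ z₂) M2.start, hz₁, ev2 q z₂ _, hz₂]
      have h' : (α ++ q) ++ (ovr bar α ++ ovr bar γ) ∈ M2.accepts := by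
        rw [hM2]
        have e1 : (α ++ q) ++ (ovr bar α ++ ovr bar γ) = α ++ q ++ ovr bar α ++ ovr bar γ := by
          simp [List.append_assoc]
        rw [e1]; exact h
      rw [DFA.mem_accepts, eval_def, ev2 (α ++ q) (ovr bar α ++ ovr bar γ) M2.start,
        ev2 α q M2.start] at h'
      exact h'
    · simp only [List.length_append]
      omega
    · rw [List.drop_left]
      have e4 : (z₁ ++ (q ++ z₂)).length - z₁.length - z₂.length = q.length := by
        simp only [List.length_append]
        omega
      rw [e4, List.take_left]


theorem ncard_le_sum_of_exists {A B ι : Type} [Inhabited ι] [Inhabited B]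
    (S : Set A) (I : Finset ι) (T : ι → Set B) (hT : ∀ i ∈ I, (T i).Finite)
    (r : ι → B → A)
    (hex : ∀ a ∈ S, ∃ i b, i ∈ I ∧ b ∈ T i ∧ r i b = a) :
    S.ncard ≤ ∑ i ∈ I, (T i).ncard := by
  classical
  set f : A → ι × B := fun a =>
    if h : ∃ i b, i ∈ I ∧ b ∈ T i ∧ r i b = a then
      (h.choose, h.choose_spec.choose) else default with hf
  apply ncard_le_sum_of_reconstruct S I T hT f (fun i b => r i b)
  intro a ha
  have hx := hex a ha
  rw [hf]
  simp only [dif_pos hx]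
  obtain ⟨h1, h2, h3⟩ := hx.choose_spec.choose_spec
  exact ⟨h1, h2, h3⟩

/-- counting words of L1: the hard direction -/
theorem hard_count_L1 {Q1 Q2 : Type} [Finite σ] [Fintype Q1] [Fintype Q2]
    (M1 : DFA σ Q1) (M2 : DFA σ Q2)
    {bar : σ → σ} {κ : ℕ} {L1 L2 : Language σ}
    (hM1 : M1.accepts = L1) (hM2 : M2.accepts = L2)
    (hL1 : ∀ w ∈ L1, ∃ u αd v : List σ, αd.length = κ ∧ w = u ++ αd ++ v ++ ovr bar αd)
    (m : ℕ) :
    cnt L1 m ≤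
      ∑ ij ∈ (Finset.range (m + (Nat.card (Q1 × Q2 × Set Q2) + κ + 1) + 1) ×ˢ
          Finset.range (m + (Nat.card (Q1 × Q2 × Set Q2) + κ + 1) + 1)).filter
          (fun ij => m ≤ ij.1 + ij.2 + κ ∧
            ij.1 + ij.2 + κ ≤ m + (Nat.card (Q1 × Q2 × Set Q2) + κ + 1)),
        cnt (MGP bar κ L1 L2) ij.1 * cnt (Mid bar κ L1 L2) ij.2 := by
  classical
  set CB := Nat.card (Q1 × Q2 × Set Q2) + κ + 1 with hCB
  have := fun (ij : ℕ × ℕ) => ncard_prod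
    {x : List σ | x ∈ MGP bar κ L1 L2 ∧ x.length = ij.1}
    {x : List σ | x ∈ Mid bar κ L1 L2 ∧ x.length = ij.2}
  calc cnt L1 m ≤ ∑ ij ∈ (Finset.range (m + CB + 1) ×ˢ Finset.range (m + CB + 1)).filter
          (fun ij => m ≤ ij.1 + ij.2 + κ ∧ ij.1 + ij.2 + κ ≤ m + CB),
        ({x : List σ | x ∈ MGP bar κ L1 L2 ∧ x.length = ij.1} ×ˢ
          {x : List σ | x ∈ Mid bar κ L1 L2 ∧ x.length = ij.2}).ncard := by
        apply ncard_le_sum_of_exists (r := fun (ij : ℕ × ℕ) (pq : List σ × List σ) =>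
          (pq.1 ++ pq.2 ++ ovr bar (pq.1.drop (pq.1.length - κ))).take m)
        · intro ij _
          exact (cnt_finite _ _).prod (cnt_finite _ _)
        · -- reconstruction
          intro w hw
          have hwm : w.length = m := hw.2
          obtain ⟨p, q, hP, hQ, h1, h2, h3⟩ :=
            hard_L1 M1 M2 hM1 hM2 hw.1 (hL1 w hw.1)
          refine ⟨(p.length, q.length), (p, q), ?_, ⟨⟨hP, rfl⟩, ⟨hQ, rfl⟩⟩, ?_⟩
          · simp only [Finset.mem_filter, Finset.mem_product, Finset.mem_range]
            refine ⟨⟨?_, ?_⟩, ?_, ?_⟩ <;> omega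
          · rw [hwm] at h3
            exact h3.symm
    _ = _ := by
        apply Finset.sum_congr rfl
        intro ij _
        rw [this ij]
        rfl

/-- counting words of L2: the hard direction -/
theorem hard_count_L2 {Q1 Q2 : Type} [Finite σ] [Fintype Q1] [Fintype Q2]
    (M1 : DFA σ Q1) (M2 : DFA σ Q2)
    {bar : σ → σ} (hbar : ∀ a, bar (bar a) = a) {κ : ℕ} {L1 L2 : Language σ}
    (hM1 : M1.accepts = L1) (hM2 : M2.accepts = L2)
    (hL2 : ∀ w ∈ L2, ∃ αd u v : List σ, αd.length = κ ∧ w = αd ++ u ++ ovr bar αd ++ v)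
    (m : ℕ) :
    cnt L2 m ≤
      ∑ ij ∈ (Finset.range (m + (Nat.card (Q1 × Q2 × Set Q2) + κ + 1) + 1) ×ˢ
          Finset.range (m + (Nat.card (Q1 × Q2 × Set Q2) + κ + 1) + 1)).filter
          (fun ij => m ≤ ij.1 + ij.2 + κ ∧
            ij.1 + ij.2 + κ ≤ m + (Nat.card (Q1 × Q2 × Set Q2) + κ + 1)),
        cnt (MGP bar κ L1 L2) ij.1 * cnt (Mid bar κ L1 L2) ij.2 := by
  classical
  set CB := Nat.card (Q1 × Q2 × Set Q2) + κ + 1 with hCB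
  have := fun (ij : ℕ × ℕ) => ncard_prod
    {x : List σ | x ∈ MGP bar κ L1 L2 ∧ x.length = ij.1}
    {x : List σ | x ∈ Mid bar κ L1 L2 ∧ x.length = ij.2}
  calc cnt L2 m ≤ ∑ ij ∈ (Finset.range (m + CB + 1) ×ˢ Finset.range (m + CB + 1)).filter
          (fun ij => m ≤ ij.1 + ij.2 + κ ∧ ij.1 + ij.2 + κ ≤ m + CB),
        ({x : List σ | x ∈ MGP bar κ L1 L2 ∧ x.length = ij.1} ×ˢ
          {x : List σ | x ∈ Mid bar κ L1 L2 ∧ x.length = ij.2}).ncard := by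
        apply ncard_le_sum_of_exists (r := fun (ij : ℕ × ℕ) (pq : List σ × List σ) =>
          (pq.1.drop (pq.1.length - κ) ++ pq.2 ++ ovr bar pq.1).drop (ij.1 + ij.2 + κ - m))
        · intro ij _
          exact (cnt_finite _ _).prod (cnt_finite _ _)
        · intro w hw
          have hwm : w.length = m := hw.2
          obtain ⟨p, q, hP, hQ, h1, h2, h3⟩ :=
            hard_L2 M1 M2 hbar hM1 hM2 hw.1 (hL2 w hw.1)
          refine ⟨(p.length, q.length), (p, q), ?_, ⟨⟨hP, rfl⟩, ⟨hQ, rfl⟩⟩, ?_⟩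
          · simp only [Finset.mem_filter, Finset.mem_product, Finset.mem_range]
            refine ⟨⟨?_, ?_⟩, ?_, ?_⟩ <;> omega
          · rw [hwm] at h3
            exact h3.symm
    _ = _ := by
        apply Finset.sum_congr rfl
        intro ij _
        rw [this ij]
        rfl

/-- counting words of MGP: the easy direction -/
theorem easy_count_MGP {Q1 Q2 : Type} [Finite σ] [Fintype Q1] [Fintype Q2]
    (M1 : DFA σ Q1) (M2 : DFA σ Q2)
    {bar : σ → σ} (hbar : ∀ a, bar (bar a) = a) {κ : ℕ} {L1 L2 : Language σ}
    (hM1 : M1.accepts = L1) (hM2 : M2.accepts = L2) (n : ℕ) :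
    cnt (MGP bar κ L1 L2) n ≤
      ∑ k ∈ Finset.range (Fintype.card Q1 + Fintype.card Q2),
        (cnt L1 (n + k) + cnt L2 (n + (k - Fintype.card Q1))) := by
  classical
  set N1 := Fintype.card Q1 with hN1
  set N2 := Fintype.card Q2 with hN2
  set T : ℕ → Set (List σ) := fun k =>
    if k < N1 then {w : List σ | w ∈ L1 ∧ w.length = n + k}
    else {w : List σ | w ∈ L2 ∧ w.length = n + (k - N1)} with hT
  calc cnt (MGP bar κ L1 L2) n ≤ ∑ k ∈ Finset.range (N1 + N2), (T k).ncard := by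
        apply ncard_le_sum_of_exists (r := fun (k : ℕ) (w' : List σ) =>
          if k < N1 then w'.take n else ovr bar (w'.drop (w'.length - n)))
        · intro k _
          by_cases hk : k < N1
          · simp only [hT, if_pos hk]; exact cnt_finite _ _
          · simp only [hT, if_neg hk]; exact cnt_finite _ _
        · intro p hp
          have hpn : p.length = n := hp.2
          rcases easy_MGP M1 M2 hM1 hM2 hp.1 with
            ⟨w', hw', hpre, hlen⟩ | ⟨w', hw', hsuf, hlen⟩
          · have hnle : n ≤ w'.length := by
              have := hpre.length_le
              omega
            have hkN : w'.length - n < N1 := by omega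
            refine ⟨w'.length - n, w', ?_, ?_, ?_⟩
            · simp only [Finset.mem_range]
              omega
            · simp only [hT, if_pos hkN]
              exact ⟨hw', by omega⟩
            · simp only [if_pos hkN]
              have := List.prefix_iff_eq_take.mp hpre
              rw [hpn] at this
              exact this.symm
          · have hnle : n ≤ w'.length := by
              have := hsuf.length_le
              rw [ovr_length, hpn] at this
              omega
            have hkN : w'.length - n < N2 := by omega
            refine ⟨N1 + (w'.length - n), w', ?_, ?_, ?_⟩
            · simp only [Finset.mem_range]
              omega
            · simp only [hT, if_neg (by omega : ¬ (N1 + (w'.length - n) < N1))]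
              exact ⟨hw', by omega⟩
            · simp only [if_neg (by omega : ¬ (N1 + (w'.length - n) < N1))]
              have h6 := List.suffix_iff_eq_drop.mp hsuf
              rw [ovr_length, hpn] at h6
              rw [← h6, ovr_ovr bar hbar]
    _ ≤ _ := by
        apply Finset.sum_le_sum
        intro k _
        by_cases hk : k < N1
        · simp only [hT, if_pos hk]
          exact Nat.le_add_right _ _
        · simp only [hT, if_neg hk]
          exact Nat.le_add_left _ _

/-- counting words of Mid: the easy direction -/
theorem easy_count_Mid {Q1 Q2 : Type} [Finite σ] [Fintype Q1] [Fintype Q2]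
    (M1 : DFA σ Q1) (M2 : DFA σ Q2)
    {bar : σ → σ} {κ : ℕ} {L1 L2 : Language σ}
    (hM1 : M1.accepts = L1) (hM2 : M2.accepts = L2) (n : ℕ) :
    cnt (Mid bar κ L1 L2) n ≤
      ∑ kk ∈ Finset.range (Fintype.card Q1 + Fintype.card Q2) ×ˢ
          Finset.range (Fintype.card Q1 + Fintype.card Q2),
        (cnt L1 (kk.1 + n + kk.2) + cnt L2 (kk.1 + n + kk.2)) := by
  classical
  set N := Fintype.card Q1 + Fintype.card Q2 with hN
  calc cnt (Mid bar κ L1 L2) n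
      ≤ ∑ kk ∈ Finset.range N ×ˢ Finset.range N,
        ({w' : List σ | (w' ∈ L1 ∨ w' ∈ L2) ∧ w'.length = kk.1 + n + kk.2}).ncard := by
        apply ncard_le_sum_of_exists (r := fun (kk : ℕ × ℕ) (w' : List σ) =>
          (w'.drop kk.1).take (w'.length - kk.1 - kk.2))
        · intro kk _
          exact (List.finite_length_eq σ _).subset (fun _ h => h.2)
        · intro q hq
          have hqn : q.length = n := hq.2
          obtain ⟨w', k₁, k₂, hor, hk₁, hk₂, hlen, hrec⟩ :=
            easy_Mid M1 M2 hM1 hM2 hq.1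
          refine ⟨(k₁, k₂), w', ?_, ⟨hor, by omega⟩, hrec.symm⟩
          simp only [Finset.mem_product, Finset.mem_range]
          exact ⟨by omega, by omega⟩
    _ ≤ _ := by
        apply Finset.sum_le_sum
        intro kk _
        have hsub : {w' : List σ | (w' ∈ L1 ∨ w' ∈ L2) ∧ w'.length = kk.1 + n + kk.2}
            ⊆ {w' : List σ | w' ∈ L1 ∧ w'.length = kk.1 + n + kk.2} ∪
              {w' : List σ | w' ∈ L2 ∧ w'.length = kk.1 + n + kk.2} := by
          intro w' hw'
          rcases hw'.1 with h | h
          · exact Or.inl ⟨h, hw'.2⟩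
          · exact Or.inr ⟨h, hw'.2⟩
        calc ({w' : List σ | (w' ∈ L1 ∨ w' ∈ L2) ∧ w'.length = kk.1 + n + kk.2}).ncard
            ≤ ({w' : List σ | w' ∈ L1 ∧ w'.length = kk.1 + n + kk.2} ∪
              {w' : List σ | w' ∈ L2 ∧ w'.length = kk.1 + n + kk.2}).ncard := by
              exact Set.ncard_le_ncard hsub ((cnt_finite _ _).union (cnt_finite _ _))
          _ ≤ _ := Set.ncard_union_le _ _


/-- the set of admissible growth bounds -/
def GS (L : Language σ) : Set ℝ :=
  { l : ℝ | 0 ≤ l ∧ ∃ c : ℝ, 0 < c ∧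
    ∀ m : ℕ, (Set.ncard { w : List σ | w ∈ L ∧ w.length = m } : ℝ) ≤ c * l ^ m }

theorem GS_up {L : Language σ} {l l' : ℝ} (h : l ∈ GS L) (hle : l ≤ l') : l' ∈ GS L := by
  obtain ⟨h0, c, hc, hb⟩ := h
  exact ⟨h0.trans hle, c, hc, fun m => (hb m).trans
    (mul_le_mul_of_nonneg_left (pow_le_pow_left₀ h0 hle m) hc.le)⟩

theorem GS_card [Fintype σ] (L : Language σ) : ((Fintype.card σ : ℕ) : ℝ) ∈ GS L := by
  refine ⟨by positivity, 1, one_pos, fun m => ?_⟩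
  rw [one_mul]
  have := cnt_le_pow L m
  calc ((Set.ncard { w : List σ | w ∈ L ∧ w.length = m } : ℕ) : ℝ)
      ≤ ((Fintype.card σ ^ m : ℕ) : ℝ) := by exact_mod_cast this
    _ = _ := by push_cast; ring

theorem GS_bddBelow (L : Language σ) : BddBelow (GS L) :=
  ⟨0, fun _ hx => hx.1⟩

theorem sInf_GS_nonneg (L : Language σ) : 0 ≤ sInf (GS L) :=
  Real.sInf_nonneg (fun _ hx => hx.1)

theorem sInf_GS_le {L : Language σ} {l : ℝ} (h : l ∈ GS L) : sInf (GS L) ≤ l :=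
  csInf_le (GS_bddBelow L) h

theorem mem_GS_of_lt [Fintype σ] {L : Language σ} {l : ℝ} (h : sInf (GS L) < l) :
    l ∈ GS L := by
  obtain ⟨x, hx, hxl⟩ := exists_lt_of_csInf_lt ⟨_, GS_card L⟩ h
  exact GS_up hx hxl.le

/-- bounding the bucket sums of the hard direction -/
theorem sum_bound {P M : Language σ} {CB κ : ℕ} {l c1 c2 : ℝ} (hl : 0 < l)
    (hc1 : 0 < c1) (hc2 : 0 < c2)
    (hbP : ∀ i, (cnt P i : ℝ) ≤ c1 * l ^ i) (hbM : ∀ j, (cnt M j : ℝ) ≤ c2 * l ^ j)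
    (m : ℕ) :
    ((∑ ij ∈ (Finset.range (m + CB + 1) ×ˢ Finset.range (m + CB + 1)).filter
        (fun ij => m ≤ ij.1 + ij.2 + κ ∧ ij.1 + ij.2 + κ ≤ m + CB),
      cnt P ij.1 * cnt M ij.2 : ℕ) : ℝ)
      ≤ ((m : ℝ) + 1)^2 * (((CB : ℝ)+1)^2 * (c1 * c2 * ((1+l)^CB * (1+1/l)^κ))) * l^m := by
  have hKnn : (0:ℝ) ≤ (1+l)^CB * (1+1/l)^κ := by positivity
  have hlK1 : (1:ℝ) ≤ (1+l)^CB := one_le_pow₀ (by linarith)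
  have hlK2 : (1:ℝ) ≤ (1+1/l)^κ := one_le_pow₀ (by
    have : 0 < 1/l := by positivity
    linarith)
  have hterm : ∀ ij : ℕ × ℕ, m ≤ ij.1 + ij.2 + κ → ij.1 + ij.2 + κ ≤ m + CB →
      ((cnt P ij.1 * cnt M ij.2 : ℕ) : ℝ)
        ≤ c1 * c2 * ((1+l)^CB * (1+1/l)^κ) * l^m := by
    rintro ⟨i, j⟩ hlo hhi
    have h1 : ((cnt P i * cnt M j : ℕ) : ℝ) = (cnt P i : ℝ) * (cnt M j : ℝ) := by
      push_cast; ring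
    rw [h1]
    have h2 : (cnt P i : ℝ) * (cnt M j : ℝ) ≤ (c1 * l^i) * (c2 * l^j) := by
      apply mul_le_mul (hbP i) (hbM j) (by positivity) (by positivity)
    refine h2.trans ?_
    have h3 : (c1 * l^i) * (c2 * l^j) = c1 * c2 * l^(i+j) := by
      rw [pow_add]; ring
    rw [h3]
    have h4 : l^(i+j) ≤ (1+l)^CB * (1+1/l)^κ * l^m := by
      rcases le_or_gt m (i+j) with hc | hc
      · have e : i + j = m + (i + j - m) := by omega
        rw [e, pow_add]
        have h7 : l^(i+j-m) ≤ (1+l)^CB := by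
          calc l^(i+j-m) ≤ (1+l)^(i+j-m) := pow_le_pow_left₀ hl.le (by linarith) _
            _ ≤ (1+l)^CB := pow_le_pow_right₀ (by linarith) (by omega)
        calc l^m * l^(i+j-m) ≤ l^m * (1+l)^CB :=
              mul_le_mul_of_nonneg_left h7 (pow_nonneg hl.le m)
          _ ≤ (1+l)^CB * (1+1/l)^κ * l^m := by
              have h8 : (1+l)^CB * l^m * 1 ≤ (1+l)^CB * l^m * (1+1/l)^κ :=
                mul_le_mul_of_nonneg_left hlK2 (by positivity)
              calc l^m * (1+l)^CB = (1+l)^CB * l^m * 1 := by ring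
                _ ≤ (1+l)^CB * l^m * (1+1/l)^κ := h8
                _ = (1+l)^CB * (1+1/l)^κ * l^m := by ring
      · have h9 : l^(i+j) = l^m * (1/l)^(m-(i+j)) := by
          have e : l^m = l^(i+j) * l^(m-(i+j)) := by
            rw [← pow_add]; congr 1; omega
          rw [e, one_div, inv_pow, mul_assoc,
            mul_inv_cancel₀ (pow_ne_zero _ hl.ne'), mul_one]
        rw [h9]
        have h10 : (1/l)^(m-(i+j)) ≤ (1+1/l)^κ := by
          calc (1/l)^(m-(i+j)) ≤ (1+1/l)^(m-(i+j)) := by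
                apply pow_le_pow_left₀ (by positivity) (by linarith) _
            _ ≤ (1+1/l)^κ := pow_le_pow_right₀ (by
                have : 0 < 1/l := by positivity
                linarith) (by omega)
        calc l^m * (1/l)^(m-(i+j)) ≤ l^m * (1+1/l)^κ :=
              mul_le_mul_of_nonneg_left h10 (pow_nonneg hl.le m)
          _ ≤ (1+l)^CB * (1+1/l)^κ * l^m := by
              have h8 : (1+1/l)^κ * l^m * 1 ≤ (1+1/l)^κ * l^m * (1+l)^CB :=
                mul_le_mul_of_nonneg_left hlK1 (by positivity)
              calc l^m * (1+1/l)^κ = (1+1/l)^κ * l^m * 1 := by ring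
                _ ≤ (1+1/l)^κ * l^m * (1+l)^CB := h8
                _ = (1+l)^CB * (1+1/l)^κ * l^m := by ring
    calc c1 * c2 * l^(i+j) ≤ c1 * c2 * ((1+l)^CB * (1+1/l)^κ * l^m) := by
          apply mul_le_mul_of_nonneg_left h4 (by positivity)
      _ = c1 * c2 * ((1+l)^CB * (1+1/l)^κ) * l^m := by ring
  -- sum over the bucket
  set B := (Finset.range (m + CB + 1) ×ˢ Finset.range (m + CB + 1)).filter
      (fun ij : ℕ × ℕ => m ≤ ij.1 + ij.2 + κ ∧ ij.1 + ij.2 + κ ≤ m + CB) with hB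
  have hcard : (B.card : ℝ) ≤ ((m:ℝ)+1)^2 * ((CB:ℝ)+1)^2 := by
    have h5 : B.card ≤ (m + CB + 1) * (m + CB + 1) := by
      calc B.card ≤ ((Finset.range (m + CB + 1)) ×ˢ (Finset.range (m + CB + 1))).card :=
            Finset.card_filter_le _ _
        _ = (m + CB + 1) * (m + CB + 1) := by
            rw [Finset.card_product, Finset.card_range]
    have h6 : ((m + CB + 1 : ℕ) : ℝ) ≤ ((m:ℝ)+1) * ((CB:ℝ)+1) := by
      push_cast; nlinarith [Nat.cast_nonneg (α := ℝ) m, Nat.cast_nonneg (α := ℝ) CB]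
    calc (B.card : ℝ) ≤ ((m + CB + 1 : ℕ) : ℝ) * ((m + CB + 1 : ℕ) : ℝ) := by
          exact_mod_cast h5
      _ ≤ (((m:ℝ)+1) * ((CB:ℝ)+1)) * (((m:ℝ)+1) * ((CB:ℝ)+1)) := by
          apply mul_le_mul h6 h6 (by positivity) (by positivity)
      _ = ((m:ℝ)+1)^2 * ((CB:ℝ)+1)^2 := by ring
  have hsum : ((∑ ij ∈ B, cnt P ij.1 * cnt M ij.2 : ℕ) : ℝ)
      ≤ (B.card : ℝ) * (c1 * c2 * ((1+l)^CB * (1+1/l)^κ) * l^m) := by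
    rw [Nat.cast_sum]
    calc ∑ ij ∈ B, ((cnt P ij.1 * cnt M ij.2 : ℕ) : ℝ)
        ≤ ∑ _ij ∈ B, (c1 * c2 * ((1+l)^CB * (1+1/l)^κ) * l^m) := by
          apply Finset.sum_le_sum
          intro ij hij
          rw [hB, Finset.mem_filter] at hij
          exact hterm ij hij.2.1 hij.2.2
      _ = (B.card : ℝ) * (c1 * c2 * ((1+l)^CB * (1+1/l)^κ) * l^m) := by
          rw [Finset.sum_const, nsmul_eq_mul]
  refine hsum.trans ?_
  calc (B.card : ℝ) * (c1 * c2 * ((1+l)^CB * (1+1/l)^κ) * l^m)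
      ≤ (((m:ℝ)+1)^2 * ((CB:ℝ)+1)^2) * (c1 * c2 * ((1+l)^CB * (1+1/l)^κ) * l^m) := by
        apply mul_le_mul_of_nonneg_right hcard (by positivity)
    _ = ((m : ℝ) + 1)^2 * (((CB : ℝ)+1)^2 * (c1 * c2 * ((1+l)^CB * (1+1/l)^κ))) * l^m := by
        ring


theorem easy_side {Q1 Q2 : Type} [Fintype σ] [Fintype Q1] [Fintype Q2]
    (M1 : DFA σ Q1) (M2 : DFA σ Q2)
    {bar : σ → σ} (hbar : ∀ a, bar (bar a) = a) {κ : ℕ} {L1 L2 : Language σ}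
    (hM1 : M1.accepts = L1) (hM2 : M2.accepts = L2)
    {l : ℝ} (h1 : l ∈ GS L1) (h2 : l ∈ GS L2) :
    l ∈ GS (MGP bar κ L1 L2) ∧ l ∈ GS (Mid bar κ L1 L2) := by
  obtain ⟨hl0, c1, hc1, hb1⟩ := h1
  obtain ⟨-, c2, hc2, hb2⟩ := h2
  have hb1' : ∀ m, (cnt L1 m : ℝ) ≤ c1 * l ^ m := hb1
  have hb2' : ∀ m, (cnt L2 m : ℝ) ≤ c2 * l ^ m := hb2
  set N := Fintype.card Q1 + Fintype.card Q2 with hN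
  have hN0 : 0 < N := by
    have := Fintype.card_pos_iff.mpr ⟨M1.start⟩
    omega
  have hone : ∀ (X : Language σ) (c : ℝ), 0 < c → (∀ m, (cnt X m : ℝ) ≤ c * l ^ m) →
      ∀ n s : ℕ, s ≤ 2*N → (cnt X (n + s) : ℝ) ≤ c * (1+l)^(2*N) * l^n := by
    intro X c hc hb n s hs
    calc (cnt X (n+s) : ℝ) ≤ c * l^(n+s) := hb _
      _ = c * (l^s * l^n) := by rw [pow_add]; ring
      _ ≤ c * ((1+l)^(2*N) * l^n) := by
          apply mul_le_mul_of_nonneg_left _ hc.le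
          apply mul_le_mul_of_nonneg_right _ (pow_nonneg hl0 n)
          calc l^s ≤ (1+l)^s := pow_le_pow_left₀ hl0 (by linarith) s
            _ ≤ (1+l)^(2*N) := pow_le_pow_right₀ (by linarith) hs
      _ = c * (1+l)^(2*N) * l^n := by ring
  constructor
  · refine ⟨hl0, (N:ℝ) * ((c1+c2) * (1+l)^(2*N)), ?_, fun n => ?_⟩
    · have : (0:ℝ) < (N:ℝ) := by exact_mod_cast hN0
      positivity
    · have s1 : (cnt (MGP bar κ L1 L2) n : ℝ)
          ≤ ((∑ k ∈ Finset.range N,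
            (cnt L1 (n + k) + cnt L2 (n + (k - Fintype.card Q1))) : ℕ) : ℝ) :=
        Nat.cast_le.mpr (easy_count_MGP M1 M2 hbar hM1 hM2 n)
      refine s1.trans ?_
      rw [Nat.cast_sum]
      calc ∑ k ∈ Finset.range N,
            ((cnt L1 (n + k) + cnt L2 (n + (k - Fintype.card Q1)) : ℕ) : ℝ)
          ≤ ∑ _k ∈ Finset.range N, ((c1+c2) * (1+l)^(2*N) * l^n) := by
            apply Finset.sum_le_sum
            intro k hk
            rw [Finset.mem_range] at hk
            push_cast
            have e1 := hone L1 c1 hc1 hb1' n k (by omega)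
            have e2 := hone L2 c2 hc2 hb2' n (k - Fintype.card Q1) (by omega)
            calc (cnt L1 (n+k) : ℝ) + (cnt L2 (n + (k - Fintype.card Q1)) : ℝ)
                ≤ c1 * (1+l)^(2*N) * l^n + c2 * (1+l)^(2*N) * l^n := by
                  exact add_le_add e1 e2
              _ = (c1+c2) * (1+l)^(2*N) * l^n := by ring
        _ = (N:ℝ) * ((c1+c2) * (1+l)^(2*N) * l^n) := by
            rw [Finset.sum_const, Finset.card_range, nsmul_eq_mul]
        _ = (N:ℝ) * ((c1+c2) * (1+l)^(2*N)) * l^n := by ring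
  · refine ⟨hl0, ((N:ℝ) * N) * ((c1+c2) * (1+l)^(2*N)), ?_, fun n => ?_⟩
    · have : (0:ℝ) < (N:ℝ) := by exact_mod_cast hN0
      positivity
    · have s1 : (cnt (Mid bar κ L1 L2) n : ℝ)
          ≤ ((∑ kk ∈ Finset.range N ×ˢ Finset.range N,
            (cnt L1 (kk.1 + n + kk.2) + cnt L2 (kk.1 + n + kk.2)) : ℕ) : ℝ) :=
        Nat.cast_le.mpr (easy_count_Mid M1 M2 hM1 hM2 n)
      refine s1.trans ?_
      rw [Nat.cast_sum]
      calc ∑ kk ∈ Finset.range N ×ˢ Finset.range N,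
            ((cnt L1 (kk.1 + n + kk.2) + cnt L2 (kk.1 + n + kk.2) : ℕ) : ℝ)
          ≤ ∑ _kk ∈ Finset.range N ×ˢ Finset.range N, ((c1+c2) * (1+l)^(2*N) * l^n) := by
            apply Finset.sum_le_sum
            rintro ⟨k₁, k₂⟩ hk
            rw [Finset.mem_product, Finset.mem_range, Finset.mem_range] at hk
            push_cast
            have e0 : k₁ + n + k₂ = n + (k₁ + k₂) := by omega
            rw [e0]
            have e1 := hone L1 c1 hc1 hb1' n (k₁ + k₂) (by omega)
            have e2 := hone L2 c2 hc2 hb2' n (k₁ + k₂) (by omega)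
            calc (cnt L1 (n+(k₁+k₂)) : ℝ) + (cnt L2 (n+(k₁+k₂)) : ℝ)
                ≤ c1 * (1+l)^(2*N) * l^n + c2 * (1+l)^(2*N) * l^n := add_le_add e1 e2
              _ = (c1+c2) * (1+l)^(2*N) * l^n := by ring
        _ = ((N:ℝ) * N) * ((c1+c2) * (1+l)^(2*N) * l^n) := by
            rw [Finset.sum_const, Finset.card_product, Finset.card_range, nsmul_eq_mul]
            push_cast
            ring
        _ = ((N:ℝ) * N) * ((c1+c2) * (1+l)^(2*N)) * l^n := by ring

theorem hard_side {Q1 Q2 : Type} [Fintype σ] [Fintype Q1] [Fintype Q2]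
    (M1 : DFA σ Q1) (M2 : DFA σ Q2)
    {bar : σ → σ} (hbar : ∀ a, bar (bar a) = a) {κ : ℕ} {L1 L2 : Language σ}
    (hM1 : M1.accepts = L1) (hM2 : M2.accepts = L2)
    (hL1d : ∀ w ∈ L1, ∃ u αd v : List σ, αd.length = κ ∧ w = u ++ αd ++ v ++ ovr bar αd)
    (hL2d : ∀ w ∈ L2, ∃ αd u v : List σ, αd.length = κ ∧ w = αd ++ u ++ ovr bar αd ++ v)
    {l l' : ℝ} (hl : 0 < l) (hll' : l < l')
    (hP : l ∈ GS (MGP bar κ L1 L2)) (hM : l ∈ GS (Mid bar κ L1 L2)) :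
    l' ∈ GS L1 ∧ l' ∈ GS L2 := by
  obtain ⟨-, c1, hc1, hb1⟩ := hP
  obtain ⟨-, c2, hc2, hb2⟩ := hM
  have hb1' : ∀ m, (cnt (MGP bar κ L1 L2) m : ℝ) ≤ c1 * l ^ m := hb1
  have hb2' : ∀ m, (cnt (Mid bar κ L1 L2) m : ℝ) ≤ c2 * l ^ m := hb2
  set CB := Nat.card (Q1 × Q2 × Set Q2) + κ + 1 with hCB
  obtain ⟨c3, hc3, hab⟩ := absorb_poly 2 hl hll'
  set A := ((CB:ℝ)+1)^2 * (c1 * c2 * ((1+l)^CB * (1+1/l)^κ)) with hA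
  have hA0 : 0 < A := by rw [hA]; positivity
  have master : ∀ L : Language σ,
      (∀ m, cnt L m ≤
        ∑ ij ∈ (Finset.range (m + CB + 1) ×ˢ Finset.range (m + CB + 1)).filter
          (fun ij => m ≤ ij.1 + ij.2 + κ ∧ ij.1 + ij.2 + κ ≤ m + CB),
        cnt (MGP bar κ L1 L2) ij.1 * cnt (Mid bar κ L1 L2) ij.2) →
      l' ∈ GS L := by
    intro L hcnt
    refine ⟨by linarith, A * c3, by positivity, fun m => ?_⟩
    have s1 : (cnt L m : ℝ) ≤
        ((∑ ij ∈ (Finset.range (m + CB + 1) ×ˢ Finset.range (m + CB + 1)).filter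
          (fun ij => m ≤ ij.1 + ij.2 + κ ∧ ij.1 + ij.2 + κ ≤ m + CB),
        cnt (MGP bar κ L1 L2) ij.1 * cnt (Mid bar κ L1 L2) ij.2 : ℕ) : ℝ) :=
      Nat.cast_le.mpr (hcnt m)
    have s2 := sum_bound (CB := CB) (κ := κ) hl hc1 hc2 hb1' hb2' m
    calc (cnt L m : ℝ) ≤ ((m:ℝ)+1)^2 * A * l^m := by
          rw [hA]
          exact s1.trans s2
      _ = A * (((m:ℝ)+1)^2 * l^m) := by ring
      _ ≤ A * (c3 * l'^m) := mul_le_mul_of_nonneg_left (hab m) hA0.le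
      _ = A * c3 * l'^m := by ring
  constructor
  · exact master L1 (fun m => hard_count_L1 M1 M2 hM1 hM2 hL1d m)
  · exact master L2 (fun m => hard_count_L2 M1 M2 hbar hM1 hM2 hL2d m)

end HPC

theorem growth_of_parts_eq_growth_of_languages
    {σ : Type} [Fintype σ] (hσ : 2 ≤ Fintype.card σ)
    (bar : σ → σ) (hbar : ∀ a, bar (bar a) = a)
    (κ : ℕ) (hκ : 1 ≤ κ)
    (L1 L2 : Language σ) (h1 : L1.IsRegular) (h2 : L2.IsRegular)
    (hL1 : ∀ w ∈ L1, ∃ u α v : List σ,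
      α.length = κ ∧ w = u ++ α ++ v ++ ovr bar α)
    (hL2 : ∀ w ∈ L2, ∃ α u v : List σ,
      α.length = κ ∧ w = α ++ u ++ ovr bar α ++ v) :
    max (growthInd L1) (growthInd L2) =
      max (growthInd (Mid bar κ L1 L2)) (growthInd (MGP bar κ L1 L2)) := by
  classical
  obtain ⟨Q1, i1, M1, hM1⟩ := h1
  obtain ⟨Q2, i2, M2, hM2⟩ := h2
  have gdef : ∀ L : Language σ, growthInd L = sInf (HPC.GS L) := fun _ => rfl
  have gnonneg : ∀ L : Language σ, 0 ≤ growthInd L := fun L => by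
    rw [gdef]; exact HPC.sInf_GS_nonneg L
  refine le_antisymm ?_ ?_
  · -- hard direction
    apply le_of_forall_pos_le_add
    intro ε hε
    set D := max (growthInd (Mid bar κ L1 L2)) (growthInd (MGP bar κ L1 L2)) with hD
    have hD0 : 0 ≤ D := le_trans (gnonneg _) (le_max_left _ _)
    have hl0 : (0:ℝ) < D + ε/2 := by linarith
    have hlP : D + ε/2 ∈ HPC.GS (MGP bar κ L1 L2) := by
      apply HPC.mem_GS_of_lt
      rw [← gdef]
      have : growthInd (MGP bar κ L1 L2) ≤ D := le_max_right _ _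
      linarith
    have hlM : D + ε/2 ∈ HPC.GS (Mid bar κ L1 L2) := by
      apply HPC.mem_GS_of_lt
      rw [← gdef]
      have : growthInd (Mid bar κ L1 L2) ≤ D := le_max_left _ _
      linarith
    obtain ⟨hGL1, hGL2⟩ := HPC.hard_side M1 M2 hbar hM1 hM2 hL1 hL2 hl0
      (by linarith : D + ε/2 < D + ε) hlP hlM
    have e1 : growthInd L1 ≤ D + ε := by
      rw [gdef]; exact HPC.sInf_GS_le hGL1
    have e2 : growthInd L2 ≤ D + ε := by
      rw [gdef]; exact HPC.sInf_GS_le hGL2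
    exact max_le e1 e2
  · -- easy direction
    apply le_of_forall_pos_le_add
    intro ε hε
    set D := max (growthInd L1) (growthInd L2) with hD
    have hG1 : D + ε ∈ HPC.GS L1 := by
      apply HPC.mem_GS_of_lt
      rw [← gdef]
      have : growthInd L1 ≤ D := le_max_left _ _
      linarith
    have hG2 : D + ε ∈ HPC.GS L2 := by
      apply HPC.mem_GS_of_lt
      rw [← gdef]
      have : growthInd L2 ≤ D := le_max_right _ _
      linarith
    obtain ⟨hGP, hGM⟩ := HPC.easy_side M1 M2 hbar hM1 hM2 hG1 hG2
    have e1 : growthInd (Mid bar κ L1 L2) ≤ D + ε := by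
      rw [gdef]; exact HPC.sInf_GS_le hGM
    have e2 : growthInd (MGP bar κ L1 L2) ≤ D + ε := by
      rw [gdef]; exact HPC.sInf_GS_le hGP
    exact max_le e1 e2
end

section
/- Let L₁ and L₂ be regular languages over Σ with L₁ ⊆ ⋃_{α ∈ Σ^κ} Σ*·α·Σ*·overline(α) and L₂ ⊆ ⋃_{α ∈ Σ^κ} α·Σ*·overline(α)·Σ*. Let λ = max(λ_{L₁}, λ_{L₂}) and let η = λ_{H_κ(L₁,L₂)}. Then √λ ≤ η ≤ λ. -/
namespace HPAux

open Set

variable {σ : Type}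

/-- Number of words of `L` of length `m`. -/
noncomputable def cnt (L : Language σ) (m : ℕ) : ℕ :=
  Set.ncard { w : List σ | w ∈ L ∧ w.length = m }

/-- The set of admissible growth bases. -/
def S (L : Language σ) : Set ℝ :=
  { l : ℝ | 0 ≤ l ∧ ∃ c : ℝ, 0 < c ∧
    ∀ m : ℕ, (cnt L m : ℝ) ≤ c * l ^ m }

lemma growthInd_eq (L : Language σ) : growthInd L = sInf (S L) := rfl

lemma setFin [Fintype σ] (L : Language σ) (m : ℕ) :
    { w : List σ | w ∈ L ∧ w.length = m }.Finite :=
  (List.finite_length_eq σ m).subset (fun _ hw => hw.2)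

lemma cnt_le_pow [Fintype σ] (L : Language σ) (m : ℕ) :
    cnt L m ≤ Fintype.card σ ^ m := by
  classical
  have hinj : Function.Injective
      (fun w : { w : List σ | w ∈ L ∧ w.length = m } =>
        (fun i : Fin m => (w : List σ).get (i.cast w.2.2.symm))) := by
    intro w w' h
    apply Subtype.ext
    apply List.ext_get (by rw [w.2.2, w'.2.2])
    intro i h1 h2
    have := congrFun h (⟨i, w.2.2 ▸ h1⟩ : Fin m)
    simpa [Fin.cast] using this
  calc cnt L m = Nat.card { w : List σ | w ∈ L ∧ w.length = m } :=
        (Nat.card_coe_set_eq _).symm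
    _ ≤ Nat.card (Fin m → σ) := Nat.card_le_card_of_injective _ hinj
    _ = Fintype.card σ ^ m := by
        simp [Nat.card_eq_fintype_card]

lemma S_nonempty [Fintype σ] (L : Language σ) : (S L).Nonempty := by
  refine ⟨(Fintype.card σ : ℝ), by positivity, 1, one_pos, fun m => ?_⟩
  rw [one_mul]
  exact_mod_cast cnt_le_pow L m

lemma S_bdd (L : Language σ) : BddBelow (S L) := ⟨0, fun _ hl => hl.1⟩

lemma growthInd_nonneg [Fintype σ] (L : Language σ) : 0 ≤ growthInd L :=
  le_csInf (S_nonempty L) (fun _ hl => hl.1)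

lemma S_up (L : Language σ) {l l' : ℝ} (h : l ∈ S L) (hle : l ≤ l') : l' ∈ S L := by
  obtain ⟨h0, c, hc, hb⟩ := h
  exact ⟨h0.trans hle, c, hc, fun m => (hb m).trans
    (mul_le_mul_of_nonneg_left (pow_le_pow_left₀ h0 hle m) hc.le)⟩

lemma mem_S_of_lt [Fintype σ] (L : Language σ) {x : ℝ} (h : growthInd L < x) : x ∈ S L := by
  obtain ⟨s, hs, hsx⟩ := (csInf_lt_iff (S_bdd L) (S_nonempty L)).1 h
  exact S_up L hs hsx.le

lemma growthInd_le [Fintype σ] (L : Language σ) {x : ℝ} (h : x ∈ S L) : growthInd L ≤ x :=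
  csInf_le (S_bdd L) h

lemma exists_long [Fintype σ] {L : Language σ}
    (h : Set.Infinite { w : List σ | w ∈ L }) (N : ℕ) :
    ∃ w ∈ L, N ≤ w.length := by
  by_contra hcon
  push_neg at hcon
  exact h ((List.finite_length_lt σ N).subset (fun w hw => hcon w hw))

lemma one_le_of_mem_S [Fintype σ] {L : Language σ}
    (h : Set.Infinite { w : List σ | w ∈ L }) {l : ℝ} (hl : l ∈ S L) : 1 ≤ l := by
  by_contra hl1
  push_neg at hl1
  obtain ⟨h0, c, hc, hb⟩ := hl
  obtain ⟨n0, hn0⟩ := exists_pow_lt_of_lt_one (x := c⁻¹) (by positivity) hl1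
  obtain ⟨w, hw, hwl⟩ := exists_long h n0
  have h1 : 1 ≤ cnt L w.length := by
    have : ({ w' : List σ | w' ∈ L ∧ w'.length = w.length }).Nonempty := ⟨w, hw, rfl⟩
    exact (Set.ncard_pos (setFin L _)).2 this
  have h2 : (cnt L w.length : ℝ) ≤ c * l ^ w.length := hb _
  have h3 : l ^ w.length ≤ l ^ n0 := pow_le_pow_of_le_one h0 hl1.le hwl
  have h4 : c * l ^ n0 < 1 := by
    have := (mul_lt_mul_iff_right₀ hc).2 hn0
    rwa [mul_inv_cancel₀ hc.ne'] at this
  have : (1 : ℝ) ≤ cnt L w.length := by exact_mod_cast h1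
  nlinarith

lemma growthInd_le_zero_of_finite [Fintype σ] (hcard : 1 ≤ Fintype.card σ)
    {L : Language σ} (h : Set.Finite { w : List σ | w ∈ L }) : growthInd L ≤ 0 := by
  have hS : ∀ x : ℝ, 0 < x → growthInd L ≤ x := by
    intro x hx
    obtain ⟨B, hB⟩ := (h.image List.length).bddAbove
    set N := B + 1 with hN
    have hlen : ∀ w ∈ L, w.length < N := fun w hw =>
      Nat.lt_succ_of_le (hB (Set.mem_image_of_mem _ hw))
    refine growthInd_le L ⟨hx.le, (Fintype.card σ : ℝ) ^ N * (max 1 x⁻¹) ^ N,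
      by positivity, fun m => ?_⟩
    rcases lt_or_ge m N with hm | hm
    · have hc1 : (cnt L m : ℝ) ≤ (Fintype.card σ : ℝ) ^ m := by
        exact_mod_cast cnt_le_pow L m
      have hc2 : ((Fintype.card σ : ℝ)) ^ m ≤ (Fintype.card σ : ℝ) ^ N := by
        apply pow_le_pow_right₀ (by exact_mod_cast hcard) hm.le
      have h1 : (1 : ℝ) ≤ max 1 x⁻¹ := le_max_left _ _
      have h2 : (x⁻¹) ^ m ≤ (max 1 x⁻¹) ^ m :=
        pow_le_pow_left₀ (by positivity) (le_max_right _ _) m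
      have h3 : (max 1 x⁻¹) ^ m ≤ (max 1 x⁻¹) ^ N := pow_le_pow_right₀ h1 hm.le
      have h4 : (1 : ℝ) ≤ (max 1 x⁻¹) ^ N * x ^ m := by
        have h5 : (x⁻¹) ^ m * x ^ m = 1 := by
          rw [← mul_pow, inv_mul_cancel₀ hx.ne', one_pow]
        have hxm : (0 : ℝ) < x ^ m := by positivity
        nlinarith
      have hcard' : (0:ℝ) ≤ (Fintype.card σ : ℝ) ^ N := by positivity
      calc (cnt L m : ℝ) ≤ (Fintype.card σ : ℝ) ^ N := hc1.trans hc2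
        _ = (Fintype.card σ : ℝ) ^ N * 1 := (mul_one _).symm
        _ ≤ (Fintype.card σ : ℝ) ^ N * ((max 1 x⁻¹) ^ N * x ^ m) := by
            exact mul_le_mul_of_nonneg_left h4 hcard'
        _ = (Fintype.card σ : ℝ) ^ N * (max 1 x⁻¹) ^ N * x ^ m := by ring
    · have : { w : List σ | w ∈ L ∧ w.length = m } = ∅ := by
        ext w
        simp only [Set.mem_setOf_eq, Set.mem_empty_iff_false, iff_false]
        rintro ⟨hw, hwl⟩
        exact absurd (hlen w hw) (by omega)
      simp only [cnt, this, Set.ncard_empty, Nat.cast_zero]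
      positivity
  by_contra hpos
  push_neg at hpos
  have := hS (growthInd L / 2) (by linarith)
  linarith

lemma infinite_of_unbounded {s : Set (List σ)} (h : ∀ N, ∃ w ∈ s, N ≤ w.length) :
    s.Infinite := by
  intro hfin
  obtain ⟨B, hB⟩ := (hfin.image List.length).bddAbove
  obtain ⟨w, hw, hlen⟩ := h (B + 1)
  have := hB (Set.mem_image_of_mem List.length hw)
  omega

lemma ncard_le_sum {β : Type} (g : ℕ → Set β) (F : Finset ℕ)
    (hg : ∀ n ∈ F, (g n).Finite) :
    ∀ s : Set β, s ⊆ (⋃ n ∈ F, g n) → s.ncard ≤ ∑ n ∈ F, (g n).ncard := by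
  induction F using Finset.induction_on with
  | empty =>
    intro s hs
    simp only [Finset.notMem_empty, Set.iUnion_of_empty, Set.iUnion_empty,
      Set.subset_empty_iff] at hs
    simp [hs]
  | @insert a F ha ih =>
    intro s hs
    have hga : (g a).Finite := hg a (Finset.mem_insert_self a F)
    have hsub : s \ g a ⊆ ⋃ n ∈ F, g n := by
      intro x hx
      have := hs hx.1
      simp only [Finset.mem_insert, Set.mem_iUnion, exists_prop] at this ⊢
      rcases this with ⟨n, hn | hn, hxn⟩
      · exact absurd (hn ▸ hxn) hx.2
      · exact ⟨n, hn, hxn⟩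
    calc s.ncard = ((s ∩ g a) ∪ (s \ g a)).ncard := by rw [Set.inter_union_diff]
      _ ≤ (s ∩ g a).ncard + (s \ g a).ncard := Set.ncard_union_le _ _
      _ ≤ (g a).ncard + ∑ n ∈ F, (g n).ncard :=
          Nat.add_le_add (Set.ncard_le_ncard Set.inter_subset_right hga)
            (ih (fun n hn => hg n (Finset.mem_insert_of_mem hn)) _ hsub)
      _ = ∑ n ∈ insert a F, (g n).ncard := by rw [Finset.sum_insert ha]

lemma ovr_length (bar : σ → σ) (w : List σ) : (ovr bar w).length = w.length := by
  simp [ovr]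

lemma ovr_ovr {bar : σ → σ} (hbar : ∀ a, bar (bar a) = a) (w : List σ) :
    ovr bar (ovr bar w) = w := by
  have hb : bar ∘ bar = id := funext hbar
  simp [ovr, List.map_reverse, List.map_map, hb]

lemma succ_le_pow {r : ℝ} (hr : 1 < r) :
    ∃ d : ℝ, 0 < d ∧ ∀ m : ℕ, (m + 1 : ℝ) ≤ d * r ^ m := by
  set δ := min (r - 1) 1 with hδdef
  have hδ : 0 < δ := lt_min (by linarith) one_pos
  have hδ1 : δ ≤ 1 := min_le_right _ _
  have hδr : 1 + δ ≤ r := by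
    have := min_le_left (r - 1) 1
    simp only [← hδdef] at this
    linarith
  refine ⟨δ⁻¹, by positivity, fun m => ?_⟩
  have h1 : 1 + (m : ℝ) * δ ≤ (1 + δ) ^ m := one_add_mul_le_pow (by linarith) m
  have h2 : (1 + δ) ^ m ≤ r ^ m := pow_le_pow_left₀ (by linarith) hδr m
  have h3 : (m + 1 : ℝ) ≤ δ⁻¹ * (1 + m * δ) := by
    have hδi : 1 ≤ δ⁻¹ := by
      have hh : δ * δ⁻¹ = 1 := mul_inv_cancel₀ hδ.ne'
      have hp : 0 < δ⁻¹ := inv_pos.2 hδ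
      nlinarith
    have : δ⁻¹ * (1 + m * δ) = δ⁻¹ + m * (δ⁻¹ * δ) := by ring
    rw [this, inv_mul_cancel₀ hδ.ne']
    linarith
  calc (m + 1 : ℝ) ≤ δ⁻¹ * (1 + m * δ) := h3
    _ ≤ δ⁻¹ * r ^ m := by
        apply mul_le_mul_of_nonneg_left _ (by positivity)
        linarith

lemma hp_subset [Fintype σ] (bar : σ → σ) (hbar : ∀ a, bar (bar a) = a) (κ : ℕ)
    (L1 L2 : Language σ) (m : ℕ) :
    { π : List σ | π ∈ hairpinCompletion bar κ L1 L2 ∧ π.length = m } ⊆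
      ⋃ n ∈ Finset.range (m + 1),
        ((fun w : List σ => w ++ ovr bar (w.take (m - n))) ''
            { w | w ∈ L1 ∧ w.length = n } ∪
          (fun w : List σ => ovr bar (w.drop (n - (m - n))) ++ w) ''
            { w | w ∈ L2 ∧ w.length = n }) := by
  rintro π ⟨⟨γ, α, β, hπ, hκα, hw⟩, hm⟩
  simp only [Set.mem_iUnion, Finset.mem_range, exists_prop]
  rcases hw with h1 | h2
  · set w := γ ++ α ++ β ++ ovr bar α with hwdef
    have hlw : m = w.length + γ.length := by
      rw [← hm, hπ]; simp [hwdef, ovr]; try omega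
    refine ⟨w.length, by omega, Or.inl ⟨w, ⟨h1, rfl⟩, ?_⟩⟩
    have hmn : m - w.length = γ.length := by omega
    have htake : w.take (m - w.length) = γ := by
      rw [hmn]
      have hsplit : w = γ ++ (α ++ β ++ ovr bar α) := by
        simp [hwdef, List.append_assoc]
      rw [hsplit, List.take_left]
    show w ++ ovr bar (w.take (m - w.length)) = π
    rw [htake, hπ]
  · set w := α ++ β ++ ovr bar α ++ ovr bar γ with hwdef
    have hlw : m = γ.length + w.length := by
      rw [← hm, hπ]; simp [hwdef, ovr]; try omega
    refine ⟨w.length, by omega, Or.inr ⟨w, ⟨h2, rfl⟩, ?_⟩⟩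
    have hmn : m - w.length = γ.length := by omega
    have hd : w.drop (w.length - (m - w.length)) = ovr bar γ := by
      rw [hmn]
      have h6 : w.length - γ.length = (α ++ β ++ ovr bar α).length := by
        simp [hwdef, ovr]; omega
      have hsplit : w = (α ++ β ++ ovr bar α) ++ ovr bar γ := by
        simp [hwdef, List.append_assoc]
      rw [h6, hsplit, List.drop_left]
    show ovr bar (w.drop (w.length - (m - w.length))) ++ w = π
    rw [hd, ovr_ovr hbar, hπ]
    simp [hwdef, List.append_assoc]

lemma cnt_hp_le [Fintype σ] (bar : σ → σ) (hbar : ∀ a, bar (bar a) = a) (κ : ℕ)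
    (L1 L2 : Language σ) (m : ℕ) :
    cnt (hairpinCompletion bar κ L1 L2) m ≤
      ∑ n ∈ Finset.range (m + 1), (cnt L1 n + cnt L2 n) := by
  have h1 : cnt (hairpinCompletion bar κ L1 L2) m ≤
      ∑ n ∈ Finset.range (m + 1),
        (((fun w : List σ => w ++ ovr bar (w.take (m - n))) ''
            { w | w ∈ L1 ∧ w.length = n } ∪
          (fun w : List σ => ovr bar (w.drop (n - (m - n))) ++ w) ''
            { w | w ∈ L2 ∧ w.length = n })).ncard :=
    ncard_le_sum _ _
      (fun n _ => ((setFin L1 n).image _).union ((setFin L2 n).image _)) _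
      (hp_subset bar hbar κ L1 L2 m)
  refine h1.trans (Finset.sum_le_sum fun n _ => ?_)
  exact (Set.ncard_union_le _ _).trans
    (Nat.add_le_add (Set.ncard_image_le (setFin L1 n)) (Set.ncard_image_le (setFin L2 n)))

lemma hp_finite [Fintype σ] (bar : σ → σ) (κ : ℕ) (L1 L2 : Language σ)
    (hf1 : Set.Finite { w : List σ | w ∈ L1 })
    (hf2 : Set.Finite { w : List σ | w ∈ L2 }) :
    Set.Finite { π : List σ | π ∈ hairpinCompletion bar κ L1 L2 } := by
  obtain ⟨B1, hB1⟩ := (hf1.image List.length).bddAbove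
  obtain ⟨B2, hB2⟩ := (hf2.image List.length).bddAbove
  apply (List.finite_length_le σ (2 * max B1 B2)).subset
  rintro π ⟨γ, α, β, hπ, _, hw⟩
  simp only [Set.mem_setOf_eq]
  have hm1 : B1 ≤ max B1 B2 := le_max_left _ _
  have hm2 : B2 ≤ max B1 B2 := le_max_right _ _
  rcases hw with h | h
  · have hb := hB1 (Set.mem_image_of_mem List.length h)
    simp only [ovr, List.length_append, List.length_reverse, List.length_map] at hb
    rw [hπ]
    simp only [ovr, List.length_append, List.length_reverse, List.length_map]
    omega
  · have hb := hB2 (Set.mem_image_of_mem List.length h)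
    simp only [ovr, List.length_append, List.length_reverse, List.length_map] at hb
    rw [hπ]
    simp only [ovr, List.length_append, List.length_reverse, List.length_map]
    omega

lemma exists_hp1 (bar : σ → σ) (κ : ℕ) (L1 L2 : Language σ)
    (hL1 : ∀ w ∈ L1, ∃ u α v : List σ, α.length = κ ∧ w = u ++ α ++ v ++ ovr bar α)
    (hκ : 1 ≤ κ) {w : List σ} (hw : w ∈ L1) :
    ∃ π ∈ hairpinCompletion bar κ L1 L2, w.length ≤ π.length := by
  obtain ⟨u, α, v, hα, hwrep⟩ := hL1 w hw
  refine ⟨w ++ ovr bar u, ⟨u, α, v, by rw [hwrep], by omega, Or.inl (by rw [← hwrep]; exact hw)⟩, ?_⟩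
  simp

lemma exists_hp2 (bar : σ → σ) (hbar : ∀ a, bar (bar a) = a) (κ : ℕ) (L1 L2 : Language σ)
    (hL2 : ∀ w ∈ L2, ∃ α u v : List σ, α.length = κ ∧ w = α ++ u ++ ovr bar α ++ v)
    (hκ : 1 ≤ κ) {w : List σ} (hw : w ∈ L2) :
    ∃ π ∈ hairpinCompletion bar κ L1 L2, w.length ≤ π.length := by
  obtain ⟨α, u, v, hα, hwrep⟩ := hL2 w hw
  refine ⟨ovr bar v ++ w, ⟨ovr bar v, α, u, ?_, by omega, Or.inr ?_⟩, by simp⟩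
  · rw [hwrep, ovr_ovr hbar]
    simp [List.append_assoc]
  · rw [ovr_ovr hbar, ← hwrep]
    exact hw

lemma cnt_le_sum_hp1 [Fintype σ] (bar : σ → σ) (κ : ℕ) (L1 L2 : Language σ)
    (hL1 : ∀ w ∈ L1, ∃ u α v : List σ, α.length = κ ∧ w = u ++ α ++ v ++ ovr bar α)
    (n : ℕ) :
    cnt L1 n ≤ ∑ m ∈ Finset.Icc n (2 * n), cnt (hairpinCompletion bar κ L1 L2) m := by
  classical
  set H := hairpinCompletion bar κ L1 L2 with hH
  set F : List σ → List σ :=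
    fun w => if h : w ∈ L1 then w ++ ovr bar (hL1 w h).choose else w with hF
  have hFmem : ∀ w (hw : w ∈ L1), F w ∈ H ∧ w.length ≤ (F w).length ∧
      (F w).length ≤ 2 * w.length ∧ (F w).take w.length = w := by
    intro w hw
    obtain ⟨α, v, hα, hwrep⟩ := (hL1 w hw).choose_spec
    set u := (hL1 w hw).choose with hu
    have hFw : F w = w ++ ovr bar u := by
      show (if h : w ∈ L1 then w ++ ovr bar (hL1 w h).choose else w) = w ++ ovr bar u
      rw [dif_pos hw]
    have hul : u.length ≤ w.length := by
      rw [hwrep]; simp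
    refine ⟨?_, ?_, ?_, ?_⟩
    · rw [hFw]
      exact ⟨u, α, v, by rw [hwrep], by omega, Or.inl (by rw [← hwrep]; exact hw)⟩
    · rw [hFw]; simp
    · rw [hFw]; simp [ovr]; omega
    · rw [hFw, List.take_left]
  set g : ℕ → Set (List σ) :=
    fun m => { w | (w ∈ L1 ∧ w.length = n) ∧ (F w).length = m } with hg
  have hgfin : ∀ m, (g m).Finite := fun m => (setFin L1 n).subset (fun w hw => hw.1)
  have hcover : { w : List σ | w ∈ L1 ∧ w.length = n } ⊆
      ⋃ m ∈ Finset.Icc n (2 * n), g m := by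
    intro w hw
    obtain ⟨_, hle1, hle2, _⟩ := hFmem w hw.1
    simp only [Set.mem_iUnion, Finset.mem_Icc, exists_prop]
    have hn : w.length = n := hw.2
    exact ⟨(F w).length, ⟨by omega, by omega⟩, ⟨hw, rfl⟩⟩
  have h1 := ncard_le_sum g (Finset.Icc n (2 * n)) (fun m _ => hgfin m) _ hcover
  refine h1.trans (Finset.sum_le_sum fun m _ => ?_)
  have hinj : Set.InjOn F (g m) := by
    intro w hw w' hw' hFeq
    have e1 := (hFmem w hw.1.1).2.2.2
    have e2 := (hFmem w' hw'.1.1).2.2.2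
    rw [hw.1.2] at e1
    rw [hw'.1.2] at e2
    rw [← e1, ← e2, hFeq]
  have himg : F '' g m ⊆ { π | π ∈ H ∧ π.length = m } := by
    rintro _ ⟨w, hw, rfl⟩
    exact ⟨(hFmem w hw.1.1).1, hw.2⟩
  calc (g m).ncard = (F '' g m).ncard := (Set.ncard_image_of_injOn hinj).symm
    _ ≤ cnt H m := Set.ncard_le_ncard himg (setFin H m)

lemma cnt_le_sum_hp2 [Fintype σ] (bar : σ → σ) (hbar : ∀ a, bar (bar a) = a)
    (κ : ℕ) (L1 L2 : Language σ)
    (hL2 : ∀ w ∈ L2, ∃ α u v : List σ, α.length = κ ∧ w = α ++ u ++ ovr bar α ++ v)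
    (n : ℕ) :
    cnt L2 n ≤ ∑ m ∈ Finset.Icc n (2 * n), cnt (hairpinCompletion bar κ L1 L2) m := by
  classical
  set H := hairpinCompletion bar κ L1 L2 with hH
  set G : List σ → List σ :=
    fun w => if h : w ∈ L2 then
      ovr bar (hL2 w h).choose_spec.choose_spec.choose ++ w else w with hG
  have hGmem : ∀ w (hw : w ∈ L2), G w ∈ H ∧ w.length ≤ (G w).length ∧
      (G w).length ≤ 2 * w.length ∧ (G w).drop ((G w).length - w.length) = w := by
    intro w hw
    obtain ⟨hα, hwrep⟩ := (hL2 w hw).choose_spec.choose_spec.choose_spec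
    have hGw : G w = ovr bar (hL2 w hw).choose_spec.choose_spec.choose ++ w := by
      show (if h : w ∈ L2 then
        ovr bar (hL2 w h).choose_spec.choose_spec.choose ++ w else w) = _
      rw [dif_pos hw]
    have hvl : ((hL2 w hw).choose_spec.choose_spec.choose).length ≤ w.length := by
      have key : ∀ a u v : List σ, w = a ++ u ++ ovr bar a ++ v → v.length ≤ w.length := by
        intro a u v h
        have h8 := congrArg List.length h
        simp only [List.length_append, ovr, List.length_reverse, List.length_map] at h8
        omega
      exact key _ _ _ hwrep
    refine ⟨?_, ?_, ?_, ?_⟩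
    · rw [hGw]
      refine ⟨ovr bar (hL2 w hw).choose_spec.choose_spec.choose, (hL2 w hw).choose,
        (hL2 w hw).choose_spec.choose, ?_, by omega, Or.inr ?_⟩
      · refine (congrArg (fun x => ovr bar
            (hL2 w hw).choose_spec.choose_spec.choose ++ x) hwrep).trans ?_
        rw [ovr_ovr hbar]
        simp [List.append_assoc]
      · rw [ovr_ovr hbar, ← hwrep]
        exact hw
    · rw [hGw]; simp
    · rw [hGw]
      have key2 : ∀ v : List σ, v.length ≤ w.length → (ovr bar v ++ w).length ≤ 2 * w.length := by
        intro v hv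
        simp only [List.length_append, ovr, List.length_reverse, List.length_map]
        omega
      exact key2 _ hvl
    · have hlen : (G w).length - w.length =
          (ovr bar (hL2 w hw).choose_spec.choose_spec.choose).length := by
        rw [hGw]; simp
      rw [hlen, hGw, List.drop_left]
  set g : ℕ → Set (List σ) :=
    fun m => { w | (w ∈ L2 ∧ w.length = n) ∧ (G w).length = m } with hg
  have hgfin : ∀ m, (g m).Finite := fun m => (setFin L2 n).subset (fun w hw => hw.1)
  have hcover : { w : List σ | w ∈ L2 ∧ w.length = n } ⊆
      ⋃ m ∈ Finset.Icc n (2 * n), g m := by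
    intro w hw
    obtain ⟨_, hle1, hle2, _⟩ := hGmem w hw.1
    simp only [Set.mem_iUnion, Finset.mem_Icc, exists_prop]
    have hn : w.length = n := hw.2
    exact ⟨(G w).length, ⟨by omega, by omega⟩, ⟨hw, rfl⟩⟩
  have h1 := ncard_le_sum g (Finset.Icc n (2 * n)) (fun m _ => hgfin m) _ hcover
  refine h1.trans (Finset.sum_le_sum fun m _ => ?_)
  have hinj : Set.InjOn G (g m) := by
    intro w hw w' hw' hGeq
    have e1 := (hGmem w hw.1.1).2.2.2
    have e2 := (hGmem w' hw'.1.1).2.2.2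
    rw [hw.1.2] at e1
    rw [hw'.1.2] at e2
    rw [hw.2] at e1
    rw [hw'.2] at e2
    rw [← e1, ← e2, hGeq]
  have himg : G '' g m ⊆ { π | π ∈ H ∧ π.length = m } := by
    rintro _ ⟨w, hw, rfl⟩
    exact ⟨(hGmem w hw.1.1).1, hw.2⟩
  calc (g m).ncard = (G '' g m).ncard := (Set.ncard_image_of_injOn hinj).symm
    _ ≤ cnt H m := Set.ncard_le_ncard himg (setFin H m)

lemma upper_core [Fintype σ] (bar : σ → σ) (hbar : ∀ a, bar (bar a) = a) (κ : ℕ)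
    (L1 L2 : Language σ) {l x c1 c2 : ℝ}
    (hb1 : ∀ m, (cnt L1 m : ℝ) ≤ c1 * l ^ m)
    (hb2 : ∀ m, (cnt L2 m : ℝ) ≤ c2 * l ^ m)
    (hc1 : 0 < c1) (hc2 : 0 < c2) (h1l : 1 ≤ l) (hlx : l < x) :
    x ∈ S (hairpinCompletion bar κ L1 L2) := by
  have hl0 : (0 : ℝ) < l := by linarith
  have hr : 1 < x / l := (one_lt_div hl0).2 hlx
  obtain ⟨d, hd, hdm⟩ := succ_le_pow hr
  refine ⟨by linarith, (c1 + c2) * d, by positivity, fun m => ?_⟩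
  have hA : (cnt (hairpinCompletion bar κ L1 L2) m : ℝ) ≤
      ∑ n ∈ Finset.range (m + 1), ((cnt L1 n : ℝ) + cnt L2 n) := by
    calc (cnt (hairpinCompletion bar κ L1 L2) m : ℝ) ≤
        ((∑ n ∈ Finset.range (m + 1), (cnt L1 n + cnt L2 n) : ℕ) : ℝ) := by
          exact_mod_cast cnt_hp_le bar hbar κ L1 L2 m
      _ = ∑ n ∈ Finset.range (m + 1), ((cnt L1 n : ℝ) + cnt L2 n) := by push_cast; rfl
  have hB : ∑ n ∈ Finset.range (m + 1), ((cnt L1 n : ℝ) + cnt L2 n) ≤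
      ∑ n ∈ Finset.range (m + 1), ((c1 + c2) * l ^ m) := by
    apply Finset.sum_le_sum
    intro n hn
    have h1 := hb1 n
    have h2 := hb2 n
    have hpow : l ^ n ≤ l ^ m :=
      pow_le_pow_right₀ h1l (by simp only [Finset.mem_range] at hn; omega)
    nlinarith
  have hC : ∑ n ∈ Finset.range (m + 1), ((c1 + c2) * l ^ m) =
      ((m : ℝ) + 1) * ((c1 + c2) * l ^ m) := by
    rw [Finset.sum_const, Finset.card_range, nsmul_eq_mul]
    push_cast
    ring
  have hD : ((m : ℝ) + 1) * l ^ m ≤ d * x ^ m := by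
    have h := hdm m
    have hxl : (x / l) ^ m * l ^ m = x ^ m := by
      rw [← mul_pow, div_mul_cancel₀ _ hl0.ne']
    calc ((m : ℝ) + 1) * l ^ m ≤ (d * (x / l) ^ m) * l ^ m :=
          mul_le_mul_of_nonneg_right h (by positivity)
      _ = d * x ^ m := by rw [mul_assoc, hxl]
  calc (cnt (hairpinCompletion bar κ L1 L2) m : ℝ) ≤
      ((m : ℝ) + 1) * ((c1 + c2) * l ^ m) := by rw [← hC]; exact hA.trans hB
    _ = (c1 + c2) * (((m : ℝ) + 1) * l ^ m) := by ring
    _ ≤ (c1 + c2) * (d * x ^ m) := mul_le_mul_of_nonneg_left hD (by positivity)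
    _ = (c1 + c2) * d * x ^ m := by ring

lemma lower_core [Fintype σ] {L H : Language σ} {l x c : ℝ}
    (hsum : ∀ n, cnt L n ≤ ∑ m ∈ Finset.Icc n (2 * n), cnt H m)
    (hl : ∀ m, (cnt H m : ℝ) ≤ c * l ^ m) (hc : 0 < c) (h1l : 1 ≤ l) (hlx : l < x) :
    x ^ 2 ∈ S L := by
  have hl0 : (0 : ℝ) < l := by linarith
  have hx0 : (0 : ℝ) < x := by linarith
  have hr : 1 < (x / l) ^ 2 := by
    have h := (one_lt_div hl0).2 hlx
    nlinarith
  obtain ⟨d, hd, hdm⟩ := succ_le_pow hr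
  refine ⟨by positivity, c * d, by positivity, fun n => ?_⟩
  have hA : (cnt L n : ℝ) ≤ ∑ m ∈ Finset.Icc n (2 * n), (c * l ^ m) := by
    calc (cnt L n : ℝ) ≤ ((∑ m ∈ Finset.Icc n (2 * n), cnt H m : ℕ) : ℝ) := by
          exact_mod_cast hsum n
      _ = ∑ m ∈ Finset.Icc n (2 * n), ((cnt H m : ℕ) : ℝ) := by push_cast; rfl
      _ ≤ ∑ m ∈ Finset.Icc n (2 * n), (c * l ^ m) :=
          Finset.sum_le_sum (fun m _ => hl m)
  have hB : ∑ m ∈ Finset.Icc n (2 * n), (c * l ^ m) ≤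
      ((n : ℝ) + 1) * (c * l ^ (2 * n)) := by
    have hle : ∀ m ∈ Finset.Icc n (2 * n), c * l ^ m ≤ c * l ^ (2 * n) := fun m hm =>
      mul_le_mul_of_nonneg_left
        (pow_le_pow_right₀ h1l (Finset.mem_Icc.1 hm).2) hc.le
    calc ∑ m ∈ Finset.Icc n (2 * n), (c * l ^ m) ≤
        ∑ m ∈ Finset.Icc n (2 * n), (c * l ^ (2 * n)) := Finset.sum_le_sum hle
      _ = ((Finset.Icc n (2 * n)).card : ℝ) * (c * l ^ (2 * n)) := by
          rw [Finset.sum_const, nsmul_eq_mul]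
      _ = ((n : ℝ) + 1) * (c * l ^ (2 * n)) := by
          rw [Nat.card_Icc]
          have h9 : 2 * n + 1 - n = n + 1 := by omega
          rw [h9]
          push_cast
          ring
  have hD : ((n : ℝ) + 1) * l ^ (2 * n) ≤ d * (x ^ 2) ^ n := by
    have h := hdm n
    have hxl : ((x / l) ^ 2) ^ n * l ^ (2 * n) = (x ^ 2) ^ n := by
      rw [pow_mul, ← mul_pow]
      congr 1
      field_simp
    calc ((n : ℝ) + 1) * l ^ (2 * n) ≤ (d * ((x / l) ^ 2) ^ n) * l ^ (2 * n) :=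
          mul_le_mul_of_nonneg_right h (by positivity)
      _ = d * (x ^ 2) ^ n := by rw [mul_assoc, hxl]
  calc (cnt L n : ℝ) ≤ ((n : ℝ) + 1) * (c * l ^ (2 * n)) := hA.trans hB
    _ = c * (((n : ℝ) + 1) * l ^ (2 * n)) := by ring
    _ ≤ c * (d * (x ^ 2) ^ n) := mul_le_mul_of_nonneg_left hD hc.le
    _ = c * d * (x ^ 2) ^ n := by ring

end HPAux


theorem growth_of_hairpin_completion_bounds
    {σ : Type} [Fintype σ] (hσ : 2 ≤ Fintype.card σ)
    (bar : σ → σ) (hbar : ∀ a, bar (bar a) = a)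
    (κ : ℕ) (hκ : 1 ≤ κ)
    (L1 L2 : Language σ) (h1 : L1.IsRegular) (h2 : L2.IsRegular)
    (hL1 : ∀ w ∈ L1, ∃ u α v : List σ,
      α.length = κ ∧ w = u ++ α ++ v ++ ovr bar α)
    (hL2 : ∀ w ∈ L2, ∃ α u v : List σ,
      α.length = κ ∧ w = α ++ u ++ ovr bar α ++ v) :
    Real.sqrt (max (growthInd L1) (growthInd L2)) ≤
        growthInd (hairpinCompletion bar κ L1 L2) ∧
      growthInd (hairpinCompletion bar κ L1 L2) ≤
        max (growthInd L1) (growthInd L2) := by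
  classical
  have hcard : 1 ≤ Fintype.card σ := by omega
  set H := hairpinCompletion bar κ L1 L2 with hH
  by_cases hfin : Set.Finite { w : List σ | w ∈ L1 } ∧ Set.Finite { w : List σ | w ∈ L2 }
  · have g1 : growthInd L1 = 0 :=
      le_antisymm (HPAux.growthInd_le_zero_of_finite hcard hfin.1) (HPAux.growthInd_nonneg L1)
    have g2 : growthInd L2 = 0 :=
      le_antisymm (HPAux.growthInd_le_zero_of_finite hcard hfin.2) (HPAux.growthInd_nonneg L2)
    have gH : growthInd H = 0 :=
      le_antisymm (HPAux.growthInd_le_zero_of_finite hcard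
        (HPAux.hp_finite bar κ L1 L2 hfin.1 hfin.2)) (HPAux.growthInd_nonneg H)
    rw [g1, g2, gH]
    simp
  · have hinf : Set.Infinite { w : List σ | w ∈ L1 } ∨
        Set.Infinite { w : List σ | w ∈ L2 } := by
      rcases not_and_or.1 hfin with h | h
      · exact Or.inl h
      · exact Or.inr h
    have hHinf : Set.Infinite { π : List σ | π ∈ H } := by
      apply HPAux.infinite_of_unbounded
      intro N
      rcases hinf with h | h
      · obtain ⟨w, hw, hwl⟩ := HPAux.exists_long h N
        obtain ⟨π, hπ, hπl⟩ := HPAux.exists_hp1 bar κ L1 L2 hL1 hκ hw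
        exact ⟨π, hπ, le_trans hwl hπl⟩
      · obtain ⟨w, hw, hwl⟩ := HPAux.exists_long h N
        obtain ⟨π, hπ, hπl⟩ := HPAux.exists_hp2 bar hbar κ L1 L2 hL2 hκ hw
        exact ⟨π, hπ, le_trans hwl hπl⟩
    have hlam1 : 1 ≤ max (growthInd L1) (growthInd L2) := by
      rcases hinf with h | h
      · exact le_max_of_le_left
          (le_csInf (HPAux.S_nonempty L1) fun l hl => HPAux.one_le_of_mem_S h hl)
      · exact le_max_of_le_right
          (le_csInf (HPAux.S_nonempty L2) fun l hl => HPAux.one_le_of_mem_S h hl)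
    have hη1 : (1 : ℝ) ≤ growthInd H :=
      le_csInf (HPAux.S_nonempty H) fun l hl => HPAux.one_le_of_mem_S hHinf hl
    have keyU : ∀ x : ℝ, max (growthInd L1) (growthInd L2) < x → growthInd H ≤ x := by
      intro x hx
      set l := (max (growthInd L1) (growthInd L2) + x) / 2 with hldef
      have hmaxl : max (growthInd L1) (growthInd L2) < l := by
        rw [hldef]; linarith
      obtain ⟨hl0, c1, hc1, hb1⟩ :=
        HPAux.mem_S_of_lt L1 (lt_of_le_of_lt (le_max_left _ _) hmaxl)
      obtain ⟨_, c2, hc2, hb2⟩ :=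
        HPAux.mem_S_of_lt L2 (lt_of_le_of_lt (le_max_right _ _) hmaxl)
      have h1l : 1 ≤ l := by rw [hldef]; linarith
      have hlx : l < x := by rw [hldef]; linarith
      exact HPAux.growthInd_le H
        (HPAux.upper_core bar hbar κ L1 L2 hb1 hb2 hc1 hc2 h1l hlx)
    have hup : growthInd H ≤ max (growthInd L1) (growthInd L2) := by
      by_contra hcon
      push_neg at hcon
      have := keyU ((max (growthInd L1) (growthInd L2) + growthInd H) / 2) (by linarith)
      linarith
    refine ⟨?_, hup⟩
    have keyL : ∀ x : ℝ, growthInd H < x →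
        max (growthInd L1) (growthInd L2) ≤ x ^ 2 := by
      intro x hx
      obtain ⟨s, hs, hsx⟩ := (csInf_lt_iff (HPAux.S_bdd H) (HPAux.S_nonempty H)).1 hx
      have h1s : 1 ≤ s := HPAux.one_le_of_mem_S hHinf hs
      obtain ⟨hs0, c, hc, hb⟩ := hs
      have m1 : growthInd L1 ≤ x ^ 2 := HPAux.growthInd_le L1
        (HPAux.lower_core (HPAux.cnt_le_sum_hp1 bar κ L1 L2 hL1) hb hc h1s hsx)
      have m2 : growthInd L2 ≤ x ^ 2 := HPAux.growthInd_le L2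
        (HPAux.lower_core (HPAux.cnt_le_sum_hp2 bar hbar κ L1 L2 hL2) hb hc h1s hsx)
      exact max_le m1 m2
    have hsq : max (growthInd L1) (growthInd L2) ≤ (growthInd H) ^ 2 := by
      by_contra hcon
      push_neg at hcon
      have hx : growthInd H < Real.sqrt ((growthInd H ^ 2 + max (growthInd L1) (growthInd L2)) / 2) := by
        apply (Real.lt_sqrt (by linarith)).2
        linarith
      have hx2 : Real.sqrt ((growthInd H ^ 2 + max (growthInd L1) (growthInd L2)) / 2) ^ 2
          = (growthInd H ^ 2 + max (growthInd L1) (growthInd L2)) / 2 :=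
        Real.sq_sqrt (by nlinarith)
      have := keyL _ hx
      rw [hx2] at this
      linarith
    calc Real.sqrt (max (growthInd L1) (growthInd L2))
        ≤ Real.sqrt ((growthInd H) ^ 2) := Real.sqrt_le_sqrt hsq
      _ = growthInd H := Real.sqrt_sq (by linarith)
end
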